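/- arXiv:2111.14771 — 5 statements merged into one kernel-verified Lean document; each statement's English description precedes it below -/
import Mathlib

section
/- Let G be a graph, S ⊆ V(G), and P a Hamiltonian path of G with endpoints u and v. Let End be the set of endpoints of all Hamiltonian paths obtainable from P by sequences of Pósa rotations fixing v, where each rotation's pivot vertex is required to lie outside S and each new endpoint must be distinct from all previously obtained endpoints. Then |N_G(End) \ S| < 2|End|, where N_G(End) denotes the external neighborhood of End in G. -/
/-- A Hamiltonian path of `G`, given as a list of vertices: no repetitions, covers every
vertex, and consecutive vertices are adjacent. -/
def IsHamPathList {V : Type*} (G : SimpleGraph V) (p : List V) : Prop :=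
  p.Nodup ∧ (∀ v : V, v ∈ p) ∧ p.Chain' G.Adj

/-- A restricted Pósa rotation fixing the first vertex of the path. Writing
`p = a ++ b` with `a = v₁,...,vᵢ` and `b = v_{i+1},...,v_n`, if the pivot `vᵢ` lies
outside `S` and `vᵢ vₙ` is an edge of `G`, the rotation produces
`q = v₁,...,vᵢ,vₙ,v_{n-1},...,v_{i+1} = a ++ b.reverse`. -/
def PosaRotation {V : Type*} (G : SimpleGraph V) (S : Set V) (p q : List V) : Prop :=
  ∃ (a b : List V) (ha : a ≠ []) (hb : b ≠ []),
    p = a ++ b ∧ 2 ≤ b.length ∧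
    a.getLast ha ∉ S ∧ G.Adj (a.getLast ha) (b.getLast hb) ∧
    q = a ++ b.reverse

/-- The set of endpoints of all paths obtainable from `p` by sequences of restricted
Pósa rotations (fixing the first vertex of `p`, pivots outside `S`). -/
def posaEnd {V : Type*} (G : SimpleGraph V) (S : Set V) (p : List V) : Set V :=
  {w | ∃ (q : List V) (hq : q ≠ []),
    Relation.ReflTransGen (PosaRotation G S) p q ∧ q.getLast hq = w}

namespace PosaAux
variable {V : Type*}

/-- `y` immediately follows `x` in the list `p`. -/
def Succ (p : List V) (x y : V) : Prop := ∃ l r : List V, p = l ++ x :: y :: r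

theorem Succ.append_left {a : List V} (b : List V) {x y : V} (h : Succ a x y) :
    Succ (a ++ b) x y := by
  obtain ⟨l, r, rfl⟩ := h
  exact ⟨l, r ++ b, by simp⟩

theorem Succ.append_right (a : List V) {b : List V} {x y : V} (h : Succ b x y) :
    Succ (a ++ b) x y := by
  obtain ⟨l, r, rfl⟩ := h
  exact ⟨a ++ l, r, by simp⟩

theorem Succ.cons (a : V) {p : List V} {x y : V} (h : Succ p x y) : Succ (a :: p) x y := by
  obtain ⟨l, r, rfl⟩ := h
  exact ⟨a :: l, r, by simp⟩

theorem Succ.reverse {p : List V} {x y : V} (h : Succ p x y) : Succ p.reverse y x := by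
  obtain ⟨l, r, rfl⟩ := h
  exact ⟨r.reverse, l.reverse, by simp⟩

theorem succ_decomp {a b : List V} {x y : V} (h : Succ (a ++ b) x y) :
    Succ a x y ∨ Succ b x y ∨ ((∃ a', a = a' ++ [x]) ∧ (∃ b', b = y :: b')) := by
  obtain ⟨l, r, hl⟩ := h
  induction a generalizing l with
  | nil => exact Or.inr (Or.inl ⟨l, r, by simpa using hl⟩)
  | cons a₀ a' ih =>
    cases l with
    | nil =>
      simp only [List.nil_append, List.cons_append, List.cons.injEq] at hl
      obtain ⟨rfl, h2⟩ := hl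
      cases a' with
      | nil =>
        simp only [List.nil_append] at h2
        exact Or.inr (Or.inr ⟨⟨[], by simp⟩, ⟨r, by simp [h2]⟩⟩)
      | cons a₁ a'' =>
        simp only [List.cons_append, List.cons.injEq] at h2
        exact Or.inl ⟨[], a'', by simp [h2.1]⟩
    | cons l₀ l' =>
      simp only [List.cons_append, List.cons.injEq] at hl
      obtain ⟨rfl, h2⟩ := hl
      rcases ih _ h2 with h | h | ⟨⟨a'', ha⟩, hb⟩
      · exact Or.inl (h.cons a₀)
      · exact Or.inr (Or.inl h)
      · exact Or.inr (Or.inr ⟨⟨a₀ :: a'', by simp [ha]⟩, hb⟩)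

theorem nodup_middle {x : V} {l r l' r' : List V} (hn : (l ++ x :: r).Nodup)
    (he : l ++ x :: r = l' ++ x :: r') : l = l' ∧ r = r' := by
  induction l generalizing l' with
  | nil =>
    cases l' with
    | nil => simpa using he
    | cons c t =>
      simp only [List.nil_append, List.cons_append, List.cons.injEq] at he
      obtain ⟨rfl, rfl⟩ := he
      simp only [List.nil_append, List.nodup_cons] at hn
      exact absurd (by simp) hn.1
  | cons l₀ l'' ih =>
    cases l' with
    | nil =>
      simp only [List.cons_append, List.nil_append, List.cons.injEq] at he
      obtain ⟨rfl, rfl⟩ := he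
      simp only [List.cons_append, List.nodup_cons] at hn
      exact absurd (by simp) hn.1
    | cons c t =>
      simp only [List.cons_append, List.cons.injEq] at he
      obtain ⟨rfl, h2⟩ := he
      simp only [List.cons_append, List.nodup_cons] at hn
      obtain ⟨rfl, rfl⟩ := ih hn.2 h2
      exact ⟨rfl, rfl⟩

theorem succ_unique_right {p : List V} (hn : p.Nodup) {x y y' : V}
    (h : Succ p x y) (h' : Succ p x y') : y = y' := by
  obtain ⟨l, r, rfl⟩ := h
  obtain ⟨l', r', he⟩ := h'
  have := nodup_middle (x := x) (l := l) (r := y :: r) (l' := l') (r' := y' :: r')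
    (by simpa using hn) (by simpa using he)
  injection this.2 with h1 h2

theorem succ_unique_left {p : List V} (hn : p.Nodup) {x y y' : V}
    (h : Succ p y x) (h' : Succ p y' x) : y = y' := by
  obtain ⟨l, r, rfl⟩ := h
  obtain ⟨l', r', he⟩ := h'
  have h2 : (l ++ [y]) ++ x :: r = (l' ++ [y']) ++ x :: r' := by simpa using he
  have hn2 : ((l ++ [y]) ++ x :: r).Nodup := by simpa using hn
  have := (nodup_middle hn2 h2).1
  have hlen : l.length = l'.length := by
    have := congrArg List.length this; simpa using this
  have := List.append_inj' this (by simp)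
  simpa using this.2

theorem succ_pred_ne {p : List V} (hn : p.Nodup) {s x t : V}
    (hs : Succ p s x) (ht : Succ p x t) : s ≠ t := by
  obtain ⟨l, r, rfl⟩ := hs
  obtain ⟨l', r', he⟩ := ht
  have h2 : (l ++ [s]) ++ x :: r = l' ++ x :: t :: r' := by simpa using he
  have hn2 : ((l ++ [s]) ++ x :: r).Nodup := by simpa using hn
  obtain ⟨h3, h4⟩ := nodup_middle hn2 h2
  have hs_notmem : s ∉ x :: r := by
    have := hn2
    rw [List.nodup_append] at this
    exact fun hmem => this.2.2 s (by simp) s hmem rfl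
  intro he'
  exact hs_notmem (by simp [h4, he'])

theorem exists_succ_of_mem {p : List V} {x : V} (hx : x ∈ p) (hlast : p.getLast? ≠ some x) :
    ∃ y, Succ p x y := by
  induction p with
  | nil => simp at hx
  | cons a t ih =>
    cases t with
    | nil =>
      simp at hx
      simp [hx] at hlast
    | cons b t' =>
      rcases List.mem_cons.mp hx with rfl | hx'
      · exact ⟨b, [], t', rfl⟩
      · have hlast' : (b :: t').getLast? ≠ some x := by
          rwa [List.getLast?_cons_cons] at hlast
        obtain ⟨y, hy⟩ := ih hx' hlast'
        exact ⟨y, hy.cons a⟩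

theorem exists_pred_of_mem {p : List V} {x : V} (hx : x ∈ p) (hhead : p.head? ≠ some x) :
    ∃ y, Succ p y x := by
  have hx' : x ∈ p.reverse := by simpa using hx
  have hlast : p.reverse.getLast? ≠ some x := by
    rwa [List.getLast?_reverse]
  obtain ⟨y, hy⟩ := exists_succ_of_mem hx' hlast
  have := hy.reverse
  rw [List.reverse_reverse] at this
  exact ⟨y, this⟩

theorem succ_ne_getLast {p : List V} (hn : p.Nodup) {x y : V} (h : Succ p x y) :
    p.getLast? ≠ some x := by
  obtain ⟨l, r, rfl⟩ := h
  rw [List.getLast?_append]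
  have h1 : (x :: y :: r).getLast? = (y :: r).getLast? := by
    rw [List.getLast?_cons_cons]
  have hmem : x ∉ (y :: r) := by
    rw [List.nodup_append] at hn
    have h2 := hn.2.1
    rw [List.nodup_cons] at h2
    exact h2.1
  intro hc
  rw [h1] at hc
  rcases Option.or_eq_some_iff.mp hc with hc' | ⟨hc', _⟩
  · obtain ⟨h', rfl⟩ := List.mem_getLast?_eq_getLast (hc' ▸ rfl : x ∈ (y :: r).getLast?)
    exact hmem (List.getLast_mem h')
  · exact (by simp at hc')

theorem succ_ne_head {p : List V} (hn : p.Nodup) {x y : V} (h : Succ p x y) :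
    p.head? ≠ some y := by
  have h' := h.reverse
  have hn' : p.reverse.Nodup := by simpa using hn
  have := succ_ne_getLast hn' h'
  rwa [List.getLast?_reverse] at this

variable {G : SimpleGraph V} {S : Set V}

theorem rotation_ham {q q' : List V} (h : PosaRotation G S q q') (hq : IsHamPathList G q) :
    IsHamPathList G q' := by
  obtain ⟨a, b, ha, hb, rfl, hlen, hS, hadj, rfl⟩ := h
  obtain ⟨hnd, hmem, hch⟩ := hq
  have hperm : (a ++ b.reverse).Perm (a ++ b) := (b.reverse_perm).append_left a
  refine ⟨(hperm.symm.nodup hnd), fun v => hperm.mem_iff.mpr (hmem v), ?_⟩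
  change List.IsChain G.Adj (a ++ b) at hch; change List.IsChain G.Adj (a ++ b.reverse)
  rw [List.isChain_append] at hch ⊢
  refine ⟨hch.1, ?_, ?_⟩
  · rw [List.isChain_reverse]
    exact hch.2.1.imp fun x y hxy => hxy.symm
  · intro x hx y hy
    rw [List.head?_reverse] at hy
    rw [List.getLast?_eq_getLast ha] at hx
    rw [List.getLast?_eq_getLast hb] at hy
    simp only [Option.mem_def, Option.some.injEq] at hx hy
    rw [hx, hy] at hadj
    exact hadj

theorem rotation_ne_nil {q q' : List V} (h : PosaRotation G S q q') : q' ≠ [] := by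
  obtain ⟨a, b, ha, hb, rfl, hlen, hS, hadj, rfl⟩ := h
  simp [ha]

theorem rotation_head? {q q' : List V} (h : PosaRotation G S q q') : q'.head? = q.head? := by
  obtain ⟨a, b, ha, hb, rfl, hlen, hS, hadj, rfl⟩ := h
  rw [List.head?_append, List.head?_append]
  cases a with
  | nil => exact absurd rfl ha
  | cons a₀ t => simp

theorem reach_ham {p q : List V} (h : Relation.ReflTransGen (PosaRotation G S) p q)
    (hp : IsHamPathList G p) : IsHamPathList G q := by
  induction h with
  | refl => exact hp
  | tail _ hstep ih => exact rotation_ham hstep ih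

theorem reach_head? {p q : List V} (h : Relation.ReflTransGen (PosaRotation G S) p q) :
    q.head? = p.head? := by
  induction h with
  | refl => rfl
  | tail _ hstep ih => rw [rotation_head? hstep, ih]

theorem getLast_mem_posaEnd {p q : List V} (h : Relation.ReflTransGen (PosaRotation G S) p q)
    (hq : q ≠ []) : q.getLast hq ∈ posaEnd G S p :=
  ⟨q, hq, h, rfl⟩

theorem getLast?_mem_posaEnd {p q : List V} (h : Relation.ReflTransGen (PosaRotation G S) p q)
    {e : V} (he : q.getLast? = some e) : e ∈ posaEnd G S p := by
  have hq : q ≠ [] := by rintro rfl; simp at he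
  have h2 := getLast_mem_posaEnd h hq
  rw [List.getLast?_eq_getLast hq, Option.some.injEq] at he
  rwa [he] at h2

/-- Performing one more rotation: if `x` is a non-last vertex of `q` outside `S` adjacent to
the endpoint of `q`, then the successor of `x` in `q` is in `posaEnd`. -/
theorem succ_mem_posaEnd {p q : List V} (hreach : Relation.ReflTransGen (PosaRotation G S) p q)
    {x z e : V} (hxz : Succ q x z) (hxS : x ∉ S) (he : q.getLast? = some e)
    (hadj : G.Adj x e) : z ∈ posaEnd G S p := by
  obtain ⟨l, r, rfl⟩ := hxz
  cases r with
  | nil =>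
    -- z is the endpoint
    have hz : (l ++ [x, z]).getLast? = some z := by
      have : l ++ [x, z] = (l ++ [x]) ++ [z] := by simp
      rw [this, List.getLast?_concat]
    rw [hz, Option.some.injEq] at he
    subst he
    exact getLast?_mem_posaEnd hreach hz
  | cons r₀ r' =>
    set a : List V := l ++ [x] with ha_def
    set b : List V := z :: r₀ :: r' with hb_def
    have ha : a ≠ [] := by simp [ha_def]
    have hb : b ≠ [] := by simp [hb_def]
    have hqa : l ++ x :: z :: r₀ :: r' = a ++ b := by simp [ha_def, hb_def]
    have halast : a.getLast ha = x := by
      have h1 : a.getLast? = some x := by rw [ha_def, List.getLast?_concat]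
      rw [List.getLast?_eq_getLast ha, Option.some.injEq] at h1
      exact h1
    have hblast? : b.getLast? = some e := by
      rw [← he, hqa, List.getLast?_append]
      rw [List.getLast?_eq_getLast hb]
      simp
    have hblast : b.getLast hb = e := by
      rw [List.getLast?_eq_getLast hb, Option.some.injEq] at hblast?
      exact hblast?
    have hrot : PosaRotation G S (l ++ x :: z :: r₀ :: r') (a ++ b.reverse) := by
      refine ⟨a, b, ha, hb, hqa, by simp [hb_def], ?_, ?_, rfl⟩
      · rw [halast]; exact hxS
      · rw [halast, hblast]; exact hadj
    have hreach' := hreach.tail hrot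
    have hlast' : (a ++ b.reverse).getLast? = some z := by
      have : b.reverse = (r₀ :: r').reverse ++ [z] := by simp [hb_def]
      rw [this, List.getLast?_append, List.getLast?_concat]
      simp
    exact getLast?_mem_posaEnd hreach' hlast'

/-- Adjacency along a list, in either direction. -/
def AdjOn (p : List V) (x y : V) : Prop := Succ p x y ∨ Succ p y x

theorem AdjOn.symm {p : List V} {x y : V} (h : AdjOn p x y) : AdjOn p y x := h.elim Or.inr Or.inl

theorem rotation_adjOn {q q' : List V} (hrot : PosaRotation G S q q') {E : Set V}
    (hE : ∀ e, q'.getLast? = some e → e ∈ E)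
    {x y : V} (hx : x ∉ E) (hy : y ∉ E) (h : AdjOn q x y) : AdjOn q' x y := by
  obtain ⟨a, b, ha, hb, rfl, hlen, hS, hadj, rfl⟩ := hrot
  have key : ∀ x y : V, y ∉ E → Succ (a ++ b) x y → AdjOn (a ++ b.reverse) x y := by
    intro x y hy h
    rcases succ_decomp h with h | h | ⟨⟨a', ha'⟩, ⟨b', hb'⟩⟩
    · exact Or.inl (h.append_left _)
    · exact Or.inr (Succ.append_right a h.reverse)
    · exfalso
      apply hy
      apply hE
      rw [hb']
      have : (y :: b').reverse = b'.reverse ++ [y] := by simp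
      rw [this, ← List.append_assoc, List.getLast?_concat]
  rcases h with h | h
  · exact key x y hy h
  · exact (key y x hx h).symm

theorem reach_adjOn {p q : List V} (hreach : Relation.ReflTransGen (PosaRotation G S) p q)
    {x y : V} (hx : x ∉ posaEnd G S p) (hy : y ∉ posaEnd G S p) (h : AdjOn p x y) :
    AdjOn q x y := by
  induction hreach with
  | refl => exact h
  | tail hr hstep ih =>
    exact rotation_adjOn hstep (fun e he => getLast?_mem_posaEnd (hr.tail hstep) he) hx hy ih

end PosaAux

/-- **Pósa's lemma for restricted rotations.** Let `P` be a Hamiltonian path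
of `G` and `S ⊆ V(G)`. If `End` is the set of endpoints of Hamiltonian paths obtained from
`P` by sequences of restricted Pósa rotations fixing the first endpoint `v`, with pivots
outside `S`, then `|N_G(End) \ S| < 2|End|`. -/
theorem stmt0 {V : Type*} [Fintype V] [DecidableEq V] (G : SimpleGraph V) (S : Set V)
    (p : List V) (hp : IsHamPathList G p) (hne : p ≠ []) :
    ({w | w ∉ posaEnd G S p ∧ ∃ u ∈ posaEnd G S p, G.Adj u w} \ S).ncard
      < 2 * (posaEnd G S p).ncard := by
  classical
  open PosaAux in
  set E := posaEnd G S p with hE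
  set u : V := p.getLast hne with hu_def
  have hu : u ∈ E := PosaAux.getLast_mem_posaEnd Relation.ReflTransGen.refl hne
  have hulast : p.getLast? = some u := List.getLast?_eq_getLast hne
  -- Claim A : every vertex of the target set is a `p`-neighbour of a vertex of `E`.
  have claimA : {w | w ∉ E ∧ ∃ u ∈ E, G.Adj u w} \ S ⊆
      {w | ∃ e ∈ E, PosaAux.Succ p e w} ∪ {w | ∃ e ∈ E, PosaAux.Succ p w e} := by
    rintro x ⟨⟨hxE, e, heE, hadj⟩, hxS⟩
    by_contra hcon
    simp only [Set.mem_union, Set.mem_setOf_eq, not_or, not_exists] at hcon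
    have hPn : ∀ w, (PosaAux.Succ p x w ∨ PosaAux.Succ p w x) → w ∉ E := by
      rintro w (h | h) hwE
      · exact hcon.2 w ⟨hwE, h⟩
      · exact hcon.1 w ⟨hwE, h⟩
    obtain ⟨q, hq, hreach, hlast⟩ := heE
    have hqham := PosaAux.reach_ham hreach hp
    have hqlast? : q.getLast? = some e := by
      rw [List.getLast?_eq_getLast hq, hlast]
    have hxq : x ∈ q := hqham.2.1 x
    have hxne : q.getLast? ≠ some x := by
      rw [hqlast?]
      intro hc
      have : e = x := by injection hc
      exact hadj.ne this
    obtain ⟨z, hz⟩ := PosaAux.exists_succ_of_mem hxq hxne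
    have hzE : z ∈ E := PosaAux.succ_mem_posaEnd hreach hz hxS hqlast? hadj.symm
    have hx_ne_lastp : p.getLast? ≠ some x := by
      rw [hulast]
      intro hc
      have : u = x := by injection hc
      exact hxE (this ▸ hu)
    obtain ⟨t, ht⟩ := PosaAux.exists_succ_of_mem (hp.2.1 x) hx_ne_lastp
    have htE : t ∉ E := hPn t (Or.inl ht)
    by_cases hxh : p.head? = some x
    · -- x is the (fixed) first vertex of the path
      have hAdj := PosaAux.reach_adjOn hreach hxE htE (Or.inl ht)
      rcases hAdj with h1 | h2
      · exact htE ((PosaAux.succ_unique_right hqham.1 h1 hz) ▸ hzE)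
      · have hqh : q.head? = some x := by rw [PosaAux.reach_head? hreach]; exact hxh
        exact PosaAux.succ_ne_head hqham.1 h2 hqh
    · -- x is an interior vertex of `p`
      obtain ⟨s, hs⟩ := PosaAux.exists_pred_of_mem (hp.2.1 x) hxh
      have hsE : s ∉ E := hPn s (Or.inr hs)
      have hst : s ≠ t := PosaAux.succ_pred_ne hp.1 hs ht
      have hAs := PosaAux.reach_adjOn hreach hsE hxE (Or.inl hs)
      have hAt := PosaAux.reach_adjOn hreach hxE htE (Or.inl ht)
      have hqs : PosaAux.Succ q s x := by
        rcases hAs with h1 | h2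
        · exact h1
        · exact absurd ((PosaAux.succ_unique_right hqham.1 h2 hz) ▸ hzE) hsE
      have hqt : PosaAux.Succ q t x := by
        rcases hAt with h1 | h2
        · exact absurd ((PosaAux.succ_unique_right hqham.1 h1 hz) ▸ hzE) htE
        · exact h2
      exact hst (PosaAux.succ_unique_left hqham.1 hqs hqt)
  -- Counting
  have hfin : E.Finite := Set.toFinite _
  have hEpos : 0 < E.ncard := (Set.ncard_pos hfin).mpr ⟨u, hu⟩
  set nxt : V → V := fun e => if h : ∃ w, PosaAux.Succ p e w then h.choose else e with hnxt
  set prv : V → V := fun e => if h : ∃ w, PosaAux.Succ p w e then h.choose else e with hprv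
  have hsub1 : {w | ∃ e ∈ E, PosaAux.Succ p e w} ⊆ nxt '' (E \ {u}) := by
    rintro w ⟨e, heE, hsw⟩
    have heu : e ≠ u := by
      intro he'
      exact PosaAux.succ_ne_getLast hp.1 hsw (he' ▸ hulast)
    refine ⟨e, ⟨heE, heu⟩, ?_⟩
    have hex : ∃ w', PosaAux.Succ p e w' := ⟨w, hsw⟩
    simp only [hnxt, dif_pos hex]
    exact PosaAux.succ_unique_right hp.1 hex.choose_spec hsw
  have hsub2 : {w | ∃ e ∈ E, PosaAux.Succ p w e} ⊆ prv '' E := by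
    rintro w ⟨e, heE, hsw⟩
    refine ⟨e, heE, ?_⟩
    have hex : ∃ w', PosaAux.Succ p w' e := ⟨w, hsw⟩
    simp only [hprv, dif_pos hex]
    exact PosaAux.succ_unique_left hp.1 hex.choose_spec hsw
  have h1 : ({w | ∃ e ∈ E, PosaAux.Succ p e w}).ncard ≤ (E \ {u}).ncard :=
    le_trans (Set.ncard_le_ncard hsub1 (Set.toFinite _)) (Set.ncard_image_le (Set.toFinite _))
  have h2 : ({w | ∃ e ∈ E, PosaAux.Succ p w e}).ncard ≤ E.ncard :=
    le_trans (Set.ncard_le_ncard hsub2 (Set.toFinite _)) (Set.ncard_image_le (Set.toFinite _))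
  have hdiff : (E \ {u}).ncard = E.ncard - 1 := Set.ncard_diff_singleton_of_mem hu
  calc ({w | w ∉ E ∧ ∃ u ∈ E, G.Adj u w} \ S).ncard
      ≤ ({w | ∃ e ∈ E, PosaAux.Succ p e w} ∪ {w | ∃ e ∈ E, PosaAux.Succ p w e}).ncard :=
        Set.ncard_le_ncard claimA (Set.toFinite _)
    _ ≤ ({w | ∃ e ∈ E, PosaAux.Succ p e w}).ncard + ({w | ∃ e ∈ E, PosaAux.Succ p w e}).ncard :=
        Set.ncard_union_le _ _
    _ < 2 * E.ncard := by omega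
end

section
/- Let n be sufficiently large, p ≥ 100 log n / n, and G_1 ~ G(n, p/2). For each 1 ≤ j ≤ 0.02n, let A_j be the event that there exists a set S of size j with |N_{G_1}(S)| < 2j. Then P(A_j) ≤ C(n,j)·C(n,2j)·(1 - p/2)^{j(n-3j)}, and consequently [j⁴ C(n,j) + j⁷ 2^{3j} n] · P(A_j) = O(1). -/
open Finset

/-- Potential edges of a graph on `Fin n`: non-diagonal unordered pairs. -/
abbrev PotEdge (n : ℕ) := {e : Sym2 (Fin n) // ¬ e.IsDiag}

open scoped Classical in
/-- The probability, under the binomial random graph `G(n,q)` (each potential edge present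
independently with probability `q`), of the set of graphs (edge sets) satisfying `P`. -/
noncomputable def gnpProb (n : ℕ) (q : ℝ) (P : Finset (PotEdge n) → Prop) : ℝ :=
  ∑ E : Finset (PotEdge n),
    if P E then q ^ E.card * (1 - q) ^ (Fintype.card (PotEdge n) - E.card) else 0

open scoped Classical in
/-- The external neighborhood of `S` in the graph with edge set `E`. -/
noncomputable def eNbhd {n : ℕ} (E : Finset (PotEdge n)) (S : Finset (Fin n)) :
    Finset (Fin n) :=
  Finset.univ.filter fun v => v ∉ S ∧ ∃ u ∈ S, ∃ e ∈ E, e.1 = s(u, v)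

/-- The event `A_j`: some vertex set of size `j` has external neighborhood of
size less than `2j`. -/
def eventA (n j : ℕ) (E : Finset (PotEdge n)) : Prop :=
  ∃ S : Finset (Fin n), S.card = j ∧ (eNbhd E S).card < 2 * j

open scoped Classical

-- binomial identity
lemma sum_powerset_binom {α : Type*} [DecidableEq α] (s : Finset α) (q : ℝ) :
    ∑ t ∈ s.powerset, q ^ t.card * (1 - q) ^ (s.card - t.card) = 1 := by
  have h := Finset.prod_add (fun _ : α => q) (fun _ => 1 - q) s
  simp only [Finset.prod_const] at h
  have h2 : ∀ t ∈ s.powerset, (q:ℝ) ^ t.card * (1 - q) ^ (s \ t).card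
      = q ^ t.card * (1 - q) ^ (s.card - t.card) := by
    intro t ht
    rw [Finset.card_sdiff_of_subset (Finset.mem_powerset.mp ht)]
  rw [Finset.sum_congr rfl h2] at h
  rw [← h]
  norm_num

lemma sum_ite_prop {β : Type*} [Fintype β] (p : β → Prop) (f : β → ℝ) :
    (∑ x : β, if p x then f x else 0) = ∑ x ∈ Finset.univ.filter p, f x := by
  rw [Finset.sum_filter]

-- mono / union bound
lemma gnpProb_exists_le {n : ℕ} {q : ℝ} (hq0 : 0 ≤ q) (hq1 : q ≤ 1)
    {ι : Type*} (I : Finset ι) (P : ι → Finset (PotEdge n) → Prop) :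
    gnpProb n q (fun E => ∃ i ∈ I, P i E) ≤ ∑ i ∈ I, gnpProb n q (P i) := by
  unfold gnpProb
  rw [Finset.sum_comm]
  apply Finset.sum_le_sum
  intro E _
  set w : ℝ := q ^ E.card * (1 - q) ^ (Fintype.card (PotEdge n) - E.card) with hw
  have hw0 : 0 ≤ w := by
    apply mul_nonneg (pow_nonneg hq0 _) (pow_nonneg (by linarith) _)
  by_cases h : ∃ i ∈ I, P i E
  · rw [if_pos h]
    obtain ⟨i0, hi0, hP⟩ := h
    have := Finset.single_le_sum (f := fun i => if P i E then w else 0)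
      (fun i _ => by by_cases hPi : P i E <;> simp [hPi, hw0]) hi0
    simpa [hP] using this
  · rw [if_neg h]
    exact Finset.sum_nonneg fun i _ => by by_cases hPi : P i E <;> simp [hPi, hw0]

lemma gnpProb_inter_empty {n : ℕ} (q : ℝ) (F : Finset (PotEdge n)) :
    gnpProb n q (fun E => E ∩ F = ∅) = (1 - q) ^ F.card := by
  simp only [gnpProb]
  have hmem : ∀ E : Finset (PotEdge n), E ∈ Fᶜ.powerset ↔ E ∩ F = ∅ := by
    intro E
    simp only [Finset.mem_powerset, Finset.eq_empty_iff_forall_notMem, Finset.mem_inter,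
      Finset.subset_iff, Finset.mem_compl]
    tauto
  refine ((Finset.sum_subset (Finset.subset_univ Fᶜ.powerset)
      (fun E _ hE => if_neg (fun h => hE ((hmem E).mpr h)))).symm.trans ?_)
  have step : ∀ E ∈ Fᶜ.powerset,
      (@ite ℝ (E ∩ F = ∅) (Classical.propDecidable ((fun E => E ∩ F = ∅) E))
          (q ^ E.card * (1 - q) ^ (Fintype.card (PotEdge n) - E.card)) 0)
        = (1 - q) ^ F.card * (q ^ E.card * (1 - q) ^ (Fᶜ.card - E.card)) := by
    intro E hE
    rw [if_pos ((hmem E).mp hE)]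
    have h1 : E.card ≤ Fᶜ.card := Finset.card_le_card (Finset.mem_powerset.mp hE)
    have h2 : Fᶜ.card = Fintype.card (PotEdge n) - F.card := Finset.card_compl F
    have h3 : F.card ≤ Fintype.card (PotEdge n) := Finset.card_le_univ F
    have h4 : Fintype.card (PotEdge n) - E.card = F.card + (Fᶜ.card - E.card) := by omega
    rw [h4, pow_add]; ring
  refine (Finset.sum_congr rfl step).trans ?_
  rw [← Finset.mul_sum, sum_powerset_binom, mul_one]

lemma gnpProb_nonneg {n : ℕ} {q : ℝ} (hq0 : 0 ≤ q) (hq1 : q ≤ 1)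
    (P : Finset (PotEdge n) → Prop) : 0 ≤ gnpProb n q P := by
  unfold gnpProb
  apply Finset.sum_nonneg
  intro E _
  by_cases h : P E <;>
    simp [h, mul_nonneg (pow_nonneg hq0 _) (pow_nonneg (by linarith : (0:ℝ) ≤ 1 - q) _)]

lemma gnpProb_mono {n : ℕ} {q : ℝ} (hq0 : 0 ≤ q) (hq1 : q ≤ 1)
    {P Q : Finset (PotEdge n) → Prop} (h : ∀ E, P E → Q E) :
    gnpProb n q P ≤ gnpProb n q Q := by
  unfold gnpProb
  apply Finset.sum_le_sum
  intro E _
  have hw0 : (0:ℝ) ≤ q ^ E.card * (1 - q) ^ (Fintype.card (PotEdge n) - E.card) :=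
    mul_nonneg (pow_nonneg hq0 _) (pow_nonneg (by linarith) _)
  by_cases hP : P E
  · rw [if_pos hP, if_pos (h E hP)]
  · rw [if_neg hP]
    by_cases hQ : Q E
    · rw [if_pos hQ]; exact hw0
    · rw [if_neg hQ]

/-- The set of potential edges between `S` and the complement of `S ∪ T`. -/
noncomputable def Fst {n : ℕ} (S T : Finset (Fin n)) : Finset (PotEdge n) :=
  Finset.univ.filter fun e => e.1 ∈ (S ×ˢ (S ∪ T)ᶜ).image (fun p => s(p.1, p.2))

lemma card_Fst {n : ℕ} (S T : Finset (Fin n)) :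
    (Fst S T).card = S.card * ((S ∪ T)ᶜ).card := by
  set K := (S ∪ T)ᶜ with hK
  have hSK : ∀ {u v : Fin n}, u ∈ S → v ∈ K → u ≠ v := by
    intro u v hu hv h
    subst h
    rw [hK, Finset.mem_compl, Finset.mem_union] at hv
    exact hv (Or.inl hu)
  set I := (S ×ˢ K).image (fun p : Fin n × Fin n => s(p.1, p.2)) with hI
  have hIcard : I.card = S.card * K.card := by
    rw [hI, Finset.card_image_of_injOn ?hinj, Finset.card_product]
    case hinj =>
      rintro ⟨u, v⟩ h ⟨u', v'⟩ h' heq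
      simp only [Finset.mem_coe, Finset.mem_product] at h h'
      simp only [Sym2.eq_iff] at heq
      rcases heq with ⟨h1, h2⟩ | ⟨h1, h2⟩
      · simp [h1, h2]
      · exact absurd h1 (hSK h.1 h'.2)
  rw [← hIcard]
  apply Finset.card_bij (fun e _ => e.1)
  · intro e he
    exact (Finset.mem_filter.mp he).2
  · intro e₁ h₁ e₂ h₂ h
    exact Subtype.ext h
  · intro y hy
    have hy' := hy
    rw [hI, Finset.mem_image] at hy'
    obtain ⟨⟨u, v⟩, hp, rfl⟩ := hy'
    rw [Finset.mem_product] at hp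
    have hne : u ≠ v := hSK hp.1 hp.2
    refine ⟨⟨s(u, v), by simp [Sym2.mk_isDiag_iff, hne]⟩, ?_, rfl⟩
    rw [Fst, Finset.mem_filter]
    exact ⟨Finset.mem_univ _, hy⟩

lemma eventA_imp {n j : ℕ} (hj3 : 3 * j ≤ n) (E : Finset (PotEdge n))
    (h : eventA n j E) :
    ∃ ST ∈ (Finset.powersetCard j (Finset.univ : Finset (Fin n))) ×ˢ
      (Finset.powersetCard (2 * j) (Finset.univ : Finset (Fin n))),
      E ∩ Fst ST.1 ST.2 = ∅ := by
  obtain ⟨S, hS, hN⟩ := h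
  obtain ⟨T, hTsub, hTcard⟩ := Finset.exists_superset_card_eq (le_of_lt hN)
    (by simpa using le_trans (by omega) hj3)
  refine ⟨(S, T), ?_, ?_⟩
  · rw [Finset.mem_product]
    constructor <;> rw [Finset.mem_powersetCard]
    · exact ⟨Finset.subset_univ _, hS⟩
    · exact ⟨Finset.subset_univ _, hTcard⟩
  · rw [Finset.eq_empty_iff_forall_notMem]
    rintro e he
    rw [Finset.mem_inter] at he
    obtain ⟨heE, heF⟩ := he
    rw [Fst, Finset.mem_filter] at heF
    obtain ⟨-, heI⟩ := heF
    rw [Finset.mem_image] at heI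
    obtain ⟨⟨u, v⟩, hp, hev⟩ := heI
    rw [Finset.mem_product, Finset.mem_compl, Finset.mem_union] at hp
    push_neg at hp
    obtain ⟨hu, hvS, hvT⟩ := hp
    have hvN : v ∈ eNbhd E S := by
      rw [eNbhd, Finset.mem_filter]
      exact ⟨Finset.mem_univ _, hvS, u, hu, e, heE, hev.symm⟩
    exact hvT (hTsub hvN)

lemma part1 {n j : ℕ} {q : ℝ} (hq0 : 0 ≤ q) (hq1 : q ≤ 1) (hj3 : 3 * j ≤ n) :
    gnpProb n q (eventA n j)
      ≤ (n.choose j : ℝ) * (n.choose (2 * j) : ℝ) * (1 - q) ^ (j * (n - 3 * j)) := by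
  set I := (Finset.powersetCard j (Finset.univ : Finset (Fin n))) ×ˢ
      (Finset.powersetCard (2 * j) (Finset.univ : Finset (Fin n))) with hIdef
  have h1 : gnpProb n q (eventA n j)
      ≤ gnpProb n q (fun E => ∃ ST ∈ I, E ∩ Fst ST.1 ST.2 = ∅) :=
    gnpProb_mono hq0 hq1 (fun E hE => eventA_imp hj3 E hE)
  have h2 : gnpProb n q (fun E => ∃ ST ∈ I, E ∩ Fst ST.1 ST.2 = ∅)
      ≤ ∑ ST ∈ I, gnpProb n q (fun E => E ∩ Fst ST.1 ST.2 = ∅) :=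
    gnpProb_exists_le hq0 hq1 I _
  have h3 : ∀ ST ∈ I, gnpProb n q (fun E => E ∩ Fst ST.1 ST.2 = ∅)
      ≤ (1 - q) ^ (j * (n - 3 * j)) := by
    rintro ⟨S, T⟩ hST
    dsimp only
    rw [hIdef, Finset.mem_product, Finset.mem_powersetCard, Finset.mem_powersetCard] at hST
    obtain ⟨⟨-, hScard⟩, ⟨-, hTcard⟩⟩ := hST
    dsimp only at hScard hTcard
    rw [gnpProb_inter_empty]
    apply pow_le_pow_of_le_one (by linarith) (by linarith)
    rw [card_Fst, hScard]
    apply Nat.mul_le_mul_left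
    rw [Finset.card_compl, Fintype.card_fin]
    have : (S ∪ T).card ≤ 3 * j := by
      calc (S ∪ T).card ≤ S.card + T.card := Finset.card_union_le S T
        _ = 3 * j := by omega
    omega
  calc gnpProb n q (eventA n j)
      ≤ ∑ ST ∈ I, gnpProb n q (fun E => E ∩ Fst ST.1 ST.2 = ∅) := le_trans h1 h2
    _ ≤ ∑ _ST ∈ I, (1 - q) ^ (j * (n - 3 * j)) := Finset.sum_le_sum h3
    _ = (n.choose j : ℝ) * (n.choose (2 * j) : ℝ) * (1 - q) ^ (j * (n - 3 * j)) := by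
        rw [Finset.sum_const, hIdef, Finset.card_product, Finset.card_powersetCard,
          Finset.card_powersetCard, Finset.card_univ, Fintype.card_fin]
        ring

set_option maxHeartbeats 1600000 in
/-- For `n` sufficiently large, `p ≥ 100 log n / n`, `G₁ ~ G(n, p/2)` and
`1 ≤ j ≤ 0.02n`: `P(A_j) ≤ C(n,j)·C(n,2j)·(1-p/2)^{j(n-3j)}`, and consequently
`[j⁴ C(n,j) + j⁷ 2^{3j} n]·P(A_j) = O(1)`. -/
theorem stmt9 :
    ∃ C : ℝ, 0 < C ∧ ∃ N : ℕ, ∀ n ≥ N, ∀ p : ℝ,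
      100 * Real.log n / n ≤ p → p ≤ 1 →
      ∀ j : ℕ, 1 ≤ j → (j : ℝ) ≤ 0.02 * n →
        gnpProb n (p / 2) (eventA n j)
            ≤ (n.choose j : ℝ) * (n.choose (2 * j) : ℝ) * (1 - p / 2) ^ (j * (n - 3 * j)) ∧
          ((j : ℝ) ^ 4 * (n.choose j : ℝ) + (j : ℝ) ^ 7 * 2 ^ (3 * j) * n)
              * gnpProb n (p / 2) (eventA n j) ≤ C := by
  refine ⟨2, by norm_num, 1, ?_⟩
  intro n hn p hp hp1 j hj1 hj2
  have hj1r : (1:ℝ) ≤ (j:ℝ) := by exact_mod_cast hj1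
  have hn50 : (50:ℝ) ≤ (n:ℝ) := by linarith
  have hn0 : (0:ℝ) < n := by linarith
  have hn1 : (1:ℝ) ≤ (n:ℝ) := by linarith
  have hlogn : 0 ≤ Real.log n := Real.log_nonneg hn1
  have hp0 : 0 ≤ p := le_trans (by positivity) hp
  have hq0 : (0:ℝ) ≤ p / 2 := by linarith
  have hq1 : p / 2 ≤ 1 := by linarith
  have h1q0 : (0:ℝ) ≤ 1 - p / 2 := by linarith
  have hj3 : 3 * j ≤ n := by
    have : ((3 * j : ℕ) : ℝ) ≤ (n : ℝ) := by push_cast; nlinarith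
    exact_mod_cast this
  have hpart1 := part1 (n := n) (j := j) hq0 hq1 hj3
  refine ⟨hpart1, ?_⟩
  set m := j * (n - 3 * j) with hm
  set A := ((j:ℝ) ^ 4 * (n.choose j : ℝ) + (j:ℝ) ^ 7 * 2 ^ (3 * j) * n) with hA
  have hA0 : 0 ≤ A := by positivity
  have hP0 := gnpProb_nonneg (n := n) hq0 hq1 (eventA n j)
  set R := (n.choose j : ℝ) * (n.choose (2 * j) : ℝ) * (1 - p / 2) ^ m with hR
  have hR0 : 0 ≤ R := by
    apply mul_nonneg (mul_nonneg (by positivity) (by positivity)) (pow_nonneg h1q0 m)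
  -- bound (1 - p/2)^m by n^{-47j}
  have hmr : (0.94 : ℝ) * ((j:ℝ) * n) ≤ (m:ℝ) := by
    have hsub : ((n - 3 * j : ℕ) : ℝ) = (n:ℝ) - 3 * j := by
      rw [Nat.cast_sub hj3]; push_cast; ring
    rw [hm]
    push_cast [hsub]
    nlinarith [mul_nonneg (by positivity : (0:ℝ) ≤ (j:ℝ)) (by linarith : (0:ℝ) ≤ (n:ℝ) - 3 * (j:ℝ) - 0.94 * (n:ℝ))]
  have hqm : (47 * (j:ℝ)) * Real.log n ≤ (m:ℝ) * (p / 2) := by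
    have h50 : 50 * Real.log n / n ≤ p / 2 := by
      have h100 : 100 * Real.log n / n = 2 * (50 * Real.log n / n) := by ring
      linarith [hp, h100.symm.trans_le hp]
    have hc0 : (0:ℝ) ≤ 50 * Real.log n / n := div_nonneg (by linarith) (le_of_lt hn0)
    calc (47 * (j:ℝ)) * Real.log n
        = (0.94 * ((j:ℝ) * n)) * (50 * Real.log n / n) := by
          field_simp
          ring
      _ ≤ (m:ℝ) * (p / 2) := mul_le_mul hmr h50 hc0 (by positivity)
  have hpow : (1 - p / 2) ^ m ≤ ((n:ℝ) ^ (47 * j))⁻¹ := by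
    calc (1 - p / 2) ^ m ≤ (Real.exp (-(p / 2))) ^ m := by
          apply pow_le_pow_left₀ h1q0
          linarith [Real.add_one_le_exp (-(p / 2))]
      _ = Real.exp ((m:ℝ) * (-(p / 2))) := by rw [← Real.exp_nat_mul]
      _ ≤ Real.exp (((47 * j : ℕ) : ℝ) * (-Real.log n)) := by
          apply Real.exp_le_exp.mpr
          push_cast
          linarith [hqm]
      _ = (Real.exp (-Real.log n)) ^ (47 * j) := by rw [Real.exp_nat_mul]
      _ = ((n:ℝ) ^ (47 * j))⁻¹ := by rw [Real.exp_neg, Real.exp_log hn0, inv_pow]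
  have hjr : (j:ℝ) ≤ n := by linarith
  have h2r : (2:ℝ) ≤ n := by linarith
  have hchoosej : (n.choose j : ℝ) ≤ (n:ℝ) ^ j := by exact_mod_cast Nat.choose_le_pow n j
  have hchoose2j : (n.choose (2 * j) : ℝ) ≤ (n:ℝ) ^ (2 * j) := by
    exact_mod_cast Nat.choose_le_pow n (2 * j)
  have hAle : A ≤ 2 * (n:ℝ) ^ (3 * j + 8) := by
    have e1 : (j:ℝ) ^ 4 * (n.choose j : ℝ) ≤ (n:ℝ) ^ 4 * (n:ℝ) ^ j :=
      mul_le_mul (pow_le_pow_left₀ (by positivity) hjr 4) hchoosej (by positivity)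
        (by positivity)
    have e2 : (n:ℝ) ^ 4 * (n:ℝ) ^ j ≤ (n:ℝ) ^ (3 * j + 8) := by
      rw [← pow_add]
      exact pow_le_pow_right₀ hn1 (by omega)
    have e3 : (j:ℝ) ^ 7 * 2 ^ (3 * j) * n ≤ (n:ℝ) ^ 7 * (n:ℝ) ^ (3 * j) * (n:ℝ) ^ 1 := by
      apply mul_le_mul _ (by norm_num) (le_of_lt hn0) (by positivity)
      exact mul_le_mul (pow_le_pow_left₀ (by positivity) hjr 7)
        (pow_le_pow_left₀ (by norm_num) h2r (3 * j)) (by positivity) (by positivity)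
    have e4 : (n:ℝ) ^ 7 * (n:ℝ) ^ (3 * j) * (n:ℝ) ^ 1 ≤ (n:ℝ) ^ (3 * j + 8) := by
      rw [← pow_add, ← pow_add]
      exact pow_le_pow_right₀ hn1 (by omega)
    rw [hA]
    linarith only [e1, e2, e3, e4]
  have hRle : R ≤ (n:ℝ) ^ (3 * j) * ((n:ℝ) ^ (47 * j))⁻¹ := by
    calc R ≤ ((n:ℝ) ^ j * (n:ℝ) ^ (2 * j)) * ((n:ℝ) ^ (47 * j))⁻¹ := by
          exact mul_le_mul
            (mul_le_mul hchoosej hchoose2j (Nat.cast_nonneg _) (pow_nonneg hn0.le j))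
            hpow (pow_nonneg h1q0 m)
            (mul_nonneg (pow_nonneg hn0.le j) (pow_nonneg hn0.le (2 * j)))
      _ = (n:ℝ) ^ (3 * j) * ((n:ℝ) ^ (47 * j))⁻¹ := by
          rw [← pow_add, show j + 2 * j = 3 * j from by ring]
  have hfinal : A * R ≤ 2 := by
    have hkey : (n:ℝ) ^ (3 * j + 8) * ((n:ℝ) ^ (3 * j) * ((n:ℝ) ^ (47 * j))⁻¹)
        = (n:ℝ) ^ (6 * j + 8) * ((n:ℝ) ^ (47 * j))⁻¹ := by
      rw [← mul_assoc, ← pow_add, show 3 * j + 8 + 3 * j = 6 * j + 8 from by ring]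
    calc A * R ≤ (2 * (n:ℝ) ^ (3 * j + 8)) * ((n:ℝ) ^ (3 * j) * ((n:ℝ) ^ (47 * j))⁻¹) :=
          mul_le_mul hAle hRle hR0
            (mul_nonneg (by norm_num) (pow_nonneg hn0.le _))
      _ = 2 * ((n:ℝ) ^ (6 * j + 8) * ((n:ℝ) ^ (47 * j))⁻¹) := by
          rw [mul_assoc, hkey]
      _ ≤ 2 * 1 := by
          apply mul_le_mul_of_nonneg_left _ (by norm_num)
          rw [← div_eq_mul_inv]
          exact div_le_one_of_le₀ (pow_le_pow_right₀ hn1 (by omega)) (pow_nonneg hn0.le _)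
      _ = 2 := by ring
  calc A * gnpProb n (p / 2) (eventA n j) ≤ A * R :=
        mul_le_mul_of_nonneg_left hpart1 hA0
    _ ≤ 2 := hfinal
end

section
/- Let G be a d-regular graph on n vertices with adjacency eigenvalues d = λ_1 ≥ λ_2 ≥ ... ≥ λ_n, and let λ = max_{2 ≤ i ≤ n} |λ_i|. Then for every two disjoint subsets U, W of V(G), |e(U,W) - d|U||W|/n| ≤ λ √(|U||W|(1 - |U|/n)(1 - |W|/n)). -/
open Finset Matrix

private lemma star_dot {n : ℕ} (M : Matrix (Fin n) (Fin n) ℝ) (x z : Fin n → ℝ) :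
    (star M *ᵥ x) ⬝ᵥ z = x ⬝ᵥ (M *ᵥ z) := by
  have h : star M = Mᵀ := by
    rw [Matrix.star_eq_conjTranspose]
    ext i j
    simp [Matrix.conjTranspose_apply]
  rw [h, Matrix.mulVec_transpose]
  exact (Matrix.dotProduct_mulVec x M z).symm

set_option maxHeartbeats 1000000 in
/-- **Expander mixing lemma.** Let `G` be a `d`-regular graph on `n` vertices
with adjacency eigenvalues `d = λ₁ ≥ λ₂ ≥ ... ≥ λₙ` and let `λ = max_{2≤i≤n} |λᵢ|`
(formalized: some index `i₀` carries the eigenvalue `d`, and all other eigenvalues are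
bounded by `lam` in absolute value). Then for all disjoint `U, W ⊆ V(G)`,
`|e(U,W) - d|U||W|/n| ≤ λ √(|U||W|(1-|U|/n)(1-|W|/n))`. -/
theorem stmt11 {n : ℕ} (G : SimpleGraph (Fin n)) [DecidableRel G.Adj] (d : ℕ)
    (hreg : G.IsRegularOfDegree d) (lam : ℝ)
    (hA : (G.adjMatrix ℝ).IsHermitian) (i₀ : Fin n)
    (h₀ : hA.eigenvalues i₀ = d)
    (hlam : ∀ i : Fin n, i ≠ i₀ → |hA.eigenvalues i| ≤ lam)
    (U W : Finset (Fin n)) (hUW : Disjoint U W) :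
    |(∑ u ∈ U, ∑ w ∈ W, if G.Adj u w then (1 : ℝ) else 0)
        - (d : ℝ) * U.card * W.card / n|
      ≤ lam * Real.sqrt ((U.card : ℝ) * W.card
          * (1 - (U.card : ℝ) / n) * (1 - (W.card : ℝ) / n)) := by
  classical
  rcases U.eq_empty_or_nonempty with rfl | hUne
  · simp
  rcases W.eq_empty_or_nonempty with rfl | hWne
  · simp
  obtain ⟨a, ha⟩ := hUne
  obtain ⟨b, hb⟩ := hWne
  have hab : a ≠ b := fun h => Finset.disjoint_left.mp hUW ha (h ▸ hb)
  have hNpos : (0 : ℝ) < n := by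
    have : 0 < n := a.pos
    exact_mod_cast this
  have hNne : (n : ℝ) ≠ 0 := ne_of_gt hNpos
  have hlam0 : 0 ≤ lam := by
    rcases ne_or_eq a i₀ with h | h
    · exact le_trans (abs_nonneg _) (hlam a h)
    · exact le_trans (abs_nonneg _) (hlam b (fun hb' => hab (h.trans hb'.symm)))
  set S := (∑ u ∈ U, ∑ w ∈ W, if G.Adj u w then (1 : ℝ) else 0) with hSdef
  set A := G.adjMatrix ℝ with hAdef
  set μ := hA.eigenvalues with hμdef
  set Um := (hA.eigenvectorUnitary : Matrix (Fin n) (Fin n) ℝ) with hUmdef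
  have hunit : Um * star Um = 1 := Matrix.mem_unitaryGroup_iff.mp hA.eigenvectorUnitary.2
  have hunit' : star Um * Um = 1 := Matrix.mem_unitaryGroup_iff'.mp hA.eigenvectorUnitary.2
  have hspec : A = Um * Matrix.diagonal μ * star Um := by
    have h := hA.spectral_theorem
    rwa [show (RCLike.ofReal ∘ μ : Fin n → ℝ) = μ by funext i; simp] at h
  have hquad : ∀ x y : Fin n → ℝ, x ⬝ᵥ (A *ᵥ y)
      = ∑ i, μ i * ((star Um *ᵥ x) i * (star Um *ᵥ y) i) := by
    intro x y
    rw [hspec, mul_assoc, ← Matrix.mulVec_mulVec, ← Matrix.mulVec_mulVec,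
      ← star_dot Um x]
    simp only [dotProduct, Matrix.mulVec_diagonal]
    exact Finset.sum_congr rfl fun i _ => by ring
  have hpres : ∀ x y : Fin n → ℝ, (star Um *ᵥ x) ⬝ᵥ (star Um *ᵥ y) = x ⬝ᵥ y := by
    intro x y
    rw [star_dot, Matrix.mulVec_mulVec, hunit, one_mulVec]
  -- vectors
  set N := (n : ℝ) with hNdef
  set u := (U.card : ℝ) with hudef
  set w := (W.card : ℝ) with hwdef
  set o : Fin n → ℝ := Function.const _ 1 with hodef
  set χU : Fin n → ℝ := fun v => if v ∈ U then 1 else 0 with hχUdef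
  set χW : Fin n → ℝ := fun v => if v ∈ W then 1 else 0 with hχWdef
  set x : Fin n → ℝ := χU - (u / N) • o with hxdef
  set y : Fin n → ℝ := χW - (w / N) • o with hydef
  have dotU : ∀ z : Fin n → ℝ, χU ⬝ᵥ z = ∑ v ∈ U, z v := by
    intro z
    simp [dotProduct, hχUdef, ite_mul, Finset.sum_ite_mem]
  have dotW : ∀ z : Fin n → ℝ, z ⬝ᵥ χW = ∑ v ∈ W, z v := by
    intro z
    simp [dotProduct, hχWdef, mul_ite, Finset.sum_ite_mem]
  have doto : ∀ z : Fin n → ℝ, o ⬝ᵥ z = ∑ v, z v := by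
    intro z; simp [dotProduct, hodef]
  have dotzo : ∀ z : Fin n → ℝ, z ⬝ᵥ o = ∑ v, z v := by
    intro z; simp [dotProduct, hodef]
  have hAo : A *ᵥ o = (d : ℝ) • o := by
    funext v
    show (A *ᵥ o) v = ((d : ℝ) • o) v
    rw [hAdef]
    simp [hodef, SimpleGraph.adjMatrix_mulVec_apply, hreg v]
  have hvecA : ∀ z : Fin n → ℝ, z ᵥ* A = A *ᵥ z := by
    intro z
    have hAT : Aᵀ = A := SimpleGraph.transpose_adjMatrix G
    rw [← Matrix.mulVec_transpose, hAT]
  have hUo : χU ⬝ᵥ o = u := by rw [dotzo]; simp [hχUdef, Finset.sum_ite_mem, hudef]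
  have hoU : o ⬝ᵥ χU = u := by rw [doto]; simp [hχUdef, Finset.sum_ite_mem, hudef]
  have hWo : χW ⬝ᵥ o = w := by rw [dotzo]; simp [hχWdef, Finset.sum_ite_mem, hwdef]
  have hoW : o ⬝ᵥ χW = w := by rw [doto]; simp [hχWdef, Finset.sum_ite_mem, hwdef]
  have hoo : o ⬝ᵥ o = N := by rw [doto]; simp [hodef, hNdef]
  have hUU : χU ⬝ᵥ χU = u := by
    rw [dotU]
    rw [Finset.sum_congr rfl fun v hv => if_pos hv]
    simp [hudef]
  have hWW : χW ⬝ᵥ χW = w := by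
    rw [dotW]
    rw [Finset.sum_congr rfl fun v hv => if_pos hv]
    simp [hwdef]
  have hSAW : χU ⬝ᵥ (A *ᵥ χW) = S := by
    rw [dotU, hSdef]
    refine Finset.sum_congr rfl fun v hv => ?_
    show (A.mulVec χW) v = _
    rw [Matrix.mulVec, dotW]
    refine Finset.sum_congr rfl fun t ht => ?_
    simp [hAdef]
  have hUAo : χU ⬝ᵥ (A *ᵥ o) = d * u := by
    rw [hAo, dotProduct_smul, hUo, smul_eq_mul]
  have hoAz : ∀ z : Fin n → ℝ, o ⬝ᵥ (A *ᵥ z) = (d : ℝ) * (o ⬝ᵥ z) := by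
    intro z
    rw [Matrix.dotProduct_mulVec, hvecA, hAo, smul_dotProduct, smul_eq_mul]
  have hoAW : o ⬝ᵥ (A *ᵥ χW) = d * w := by rw [hoAz, hoW]
  have hoAo : o ⬝ᵥ (A *ᵥ o) = d * N := by rw [hoAz, hoo]
  have hxAy : x ⬝ᵥ (A *ᵥ y) = S - (d : ℝ) * u * w / N := by
    rw [hxdef, hydef]
    rw [Matrix.mulVec_sub, Matrix.mulVec_smul]
    simp only [sub_dotProduct, dotProduct_sub, smul_dotProduct,
      dotProduct_smul, smul_eq_mul, hSAW, hUAo, hoAW, hoAo]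
    field_simp
    ring
  have hxx : x ⬝ᵥ x = u * (1 - u / N) := by
    rw [hxdef]
    simp only [sub_dotProduct, dotProduct_sub, smul_dotProduct,
      dotProduct_smul, smul_eq_mul, hUU, hUo, hoU, hoo]
    field_simp
    ring
  have hyy : y ⬝ᵥ y = w * (1 - w / N) := by
    rw [hydef]
    simp only [sub_dotProduct, dotProduct_sub, smul_dotProduct,
      dotProduct_smul, smul_eq_mul, hWW, hWo, hoW, hoo]
    field_simp
    ring
  have hxo : x ⬝ᵥ o = 0 := by
    rw [hxdef]
    simp only [sub_dotProduct, smul_dotProduct, smul_eq_mul, hUo, hoo]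
    field_simp
    ring
  set px := star Um *ᵥ x with hpxdef
  set py := star Um *ᵥ y with hpydef
  set t := star Um *ᵥ o with htdef
  have ht : ∀ i, μ i * t i = (d : ℝ) * t i := by
    intro i
    have h1 : star Um *ᵥ (A *ᵥ o) = Matrix.diagonal μ *ᵥ t := by
      rw [hspec, Matrix.mulVec_mulVec, ← mul_assoc, ← mul_assoc, hunit',
        one_mul, ← Matrix.mulVec_mulVec, htdef]
    have h2 : star Um *ᵥ (A *ᵥ o) = (d : ℝ) • t := by
      rw [hAo, Matrix.mulVec_smul, htdef]
    have h3 := h2.symm.trans h1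
    have h4 := congrFun h3 i
    simpa [Matrix.mulVec_diagonal] using h4.symm
  have htt : t ⬝ᵥ t = N := by rw [htdef, hpres, hoo]
  have hpxt : px ⬝ᵥ t = 0 := by rw [hpxdef, htdef, hpres, hxo]
  have hterm : ∀ i, |μ i * (px i * py i)| ≤ lam * (|px i| * |py i|) := by
    intro i
    by_cases hi : i = i₀
    · rw [hi]
      by_cases hd : (d : ℝ) ≤ lam
      · rw [abs_mul, abs_mul]
        refine mul_le_mul_of_nonneg_right ?_ (by positivity)
        rw [h₀, abs_of_nonneg (by positivity : (0:ℝ) ≤ (d:ℝ))]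
        exact hd
      · push_neg at hd
        have ht0 : ∀ j, j ≠ i₀ → t j = 0 := by
          intro j hj
          by_contra h2
          have hμj : μ j = (d : ℝ) := mul_right_cancel₀ h2 (ht j)
          have := hlam j hj
          rw [hμj, abs_of_nonneg (by positivity : (0:ℝ) ≤ (d:ℝ))] at this
          exact absurd this (not_le.mpr hd)
        have hti₀ : t i₀ ≠ 0 := by
          intro h0
          have hz : t ⬝ᵥ t = 0 := by
            rw [dotProduct]
            refine Finset.sum_eq_zero fun j _ => ?_
            by_cases hj : j = i₀
            · rw [hj, h0, mul_zero]
            · rw [ht0 j hj, zero_mul]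
          rw [htt] at hz
          exact hNne hz
        have hpx0 : px i₀ = 0 := by
          have hsum : px ⬝ᵥ t = px i₀ * t i₀ := by
            rw [dotProduct]
            refine Finset.sum_eq_single i₀ (fun j _ hj => by rw [ht0 j hj, mul_zero])
              (fun h => absurd (Finset.mem_univ i₀) h)
          rw [hpxt] at hsum
          exact (mul_eq_zero.mp hsum.symm).resolve_right hti₀
        simp [hpx0]
    · rw [abs_mul, abs_mul]
      exact mul_le_mul_of_nonneg_right (hlam i hi) (by positivity)
  have hxx0 : 0 ≤ x ⬝ᵥ x := by
    rw [← hpres x x]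
    exact Finset.sum_nonneg fun i _ => mul_self_nonneg _
  have hyy0 : 0 ≤ y ⬝ᵥ y := by
    rw [← hpres y y]
    exact Finset.sum_nonneg fun i _ => mul_self_nonneg _
  have hcs : (∑ i, |px i| * |py i|) ≤ Real.sqrt (x ⬝ᵥ x) * Real.sqrt (y ⬝ᵥ y) := by
    rw [← Real.sqrt_mul hxx0]
    have h1 : (∑ i, |px i| * |py i|) ^ 2 ≤ (x ⬝ᵥ x) * (y ⬝ᵥ y) := by
      have h2 := Finset.sum_mul_sq_le_sq_mul_sq Finset.univ (fun i => |px i|) (fun i => |py i|)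
      have hxx' : ∑ i, |px i| ^ 2 = x ⬝ᵥ x := by
        rw [← hpres x x, dotProduct]
        exact Finset.sum_congr rfl fun i _ => by rw [sq_abs, sq]
      have hyy' : ∑ i, |py i| ^ 2 = y ⬝ᵥ y := by
        rw [← hpres y y, dotProduct]
        exact Finset.sum_congr rfl fun i _ => by rw [sq_abs, sq]
      rw [hxx', hyy'] at h2
      exact h2
    exact (Real.le_sqrt (Finset.sum_nonneg fun i _ => by positivity)
      (mul_nonneg hxx0 hyy0)).mpr h1
  have hmain : |x ⬝ᵥ (A *ᵥ y)| ≤ lam * (Real.sqrt (x ⬝ᵥ x) * Real.sqrt (y ⬝ᵥ y)) := by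
    calc |x ⬝ᵥ (A *ᵥ y)| = |∑ i, μ i * (px i * py i)| := by rw [hquad]
      _ ≤ ∑ i, |μ i * (px i * py i)| := Finset.abs_sum_le_sum_abs _ _
      _ ≤ ∑ i, lam * (|px i| * |py i|) := Finset.sum_le_sum fun i _ => hterm i
      _ = lam * ∑ i, |px i| * |py i| := by rw [← Finset.mul_sum]
      _ ≤ lam * (Real.sqrt (x ⬝ᵥ x) * Real.sqrt (y ⬝ᵥ y)) :=
          mul_le_mul_of_nonneg_left hcs hlam0
  have hcard : u ≤ N := by
    rw [hudef, hNdef]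
    exact_mod_cast (Finset.card_le_univ U).trans_eq (by simp)
  have hcardW : w ≤ N := by
    rw [hwdef, hNdef]
    exact_mod_cast (Finset.card_le_univ W).trans_eq (by simp)
  have hu1 : 0 ≤ 1 - u / N := by
    rw [sub_nonneg]
    exact div_le_one_of_le₀ hcard (le_of_lt hNpos)
  have hu0 : (0:ℝ) ≤ u := by exact Nat.cast_nonneg _
  have hw0 : (0:ℝ) ≤ w := by exact Nat.cast_nonneg _
  have hfin : lam * (Real.sqrt (x ⬝ᵥ x) * Real.sqrt (y ⬝ᵥ y))
      = lam * Real.sqrt (u * w * (1 - u / N) * (1 - w / N)) := by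
    rw [hxx, hyy, ← Real.sqrt_mul (mul_nonneg hu0 hu1)]
    congr 1
    ring
  calc |S - (d : ℝ) * u * w / N| = |x ⬝ᵥ (A *ᵥ y)| := by rw [hxAy]
    _ ≤ lam * (Real.sqrt (x ⬝ᵥ x) * Real.sqrt (y ⬝ᵥ y)) := hmain
    _ = lam * Real.sqrt (u * w * (1 - u / N) * (1 - w / N)) := hfin
end

section
/- For n sufficiently large and m = O(n log log n), if G ~ G(n, m) is a uniformly random graph on [n] with m edges, then the probability that G has minimum degree at least 2 is at most n · exp(-2m · e^{-2m/n}). -/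
open Finset

open scoped Classical in
/-- All graphs on `[n]` with exactly `m` edges, encoded by their edge sets. -/
noncomputable def graphsWithEdges (n m : ℕ) : Finset (Finset (PotEdge n)) :=
  Finset.univ.filter fun E => E.card = m

open scoped Classical in
/-- Graphs on `[n]` with exactly `m` edges and minimum degree at least 2. -/
noncomputable def graphsWithEdgesMinDeg2 (n m : ℕ) : Finset (Finset (PotEdge n)) :=
  (graphsWithEdges n m).filter fun E =>
    ∀ v : Fin n, 2 ≤ (E.filter fun e => v ∈ e.1).card

open Filter

open scoped Classical in
/-- number of maps `Fin k → Fin n` hitting every vertex at least twice -/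
noncomputable def Fcnt (n k : ℕ) : ℕ :=
  (Finset.univ.filter fun w : Fin k → Fin n =>
    ∀ v, 2 ≤ (Finset.univ.filter fun i => w i = v).card).card

open scoped Classical

lemma sym2_card_filter_mem {n : ℕ} (e : Sym2 (Fin n)) (he : ¬ e.IsDiag) :
    (univ.filter fun v => v ∈ e).card = 2 := by
  induction e using Sym2.ind with
  | _ a b =>
    rw [Sym2.mk_isDiag_iff] at he
    have : (univ.filter fun v => v ∈ s(a, b)) = {a, b} := by
      ext x; simp [Sym2.mem_iff]
    rw [this, card_insert_of_notMem (by simp [he]), card_singleton]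

lemma degree_sum {n : ℕ} (E : Finset (PotEdge n)) :
    ∑ v : Fin n, (E.filter fun e => v ∈ e.1).card = 2 * E.card := by
  classical
  have : ∀ v : Fin n, (E.filter fun e => v ∈ e.1).card
      = ∑ e ∈ E, if v ∈ e.1 then 1 else 0 := by
    intro v; rw [card_filter]
  simp_rw [this]
  rw [Finset.sum_comm]
  have : ∀ e ∈ E, (∑ v : Fin n, if v ∈ e.1 then 1 else 0) = 2 := by
    intro e _
    rw [← card_filter]
    exact sym2_card_filter_mem e.1 e.2
  rw [Finset.sum_congr rfl this, Finset.sum_const, smul_eq_mul, mul_comm]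

lemma minDeg2_n_le_m {n m : ℕ} {E : Finset (PotEdge n)}
    (hE : E ∈ graphsWithEdgesMinDeg2 n m) : n ≤ m := by
  rw [graphsWithEdgesMinDeg2, mem_filter, graphsWithEdges, mem_filter] at hE
  obtain ⟨⟨-, hcard⟩, hdeg⟩ := hE
  have h1 : 2 * n ≤ ∑ v : Fin n, (E.filter fun e => v ∈ e.1).card := by
    calc 2 * n = ∑ _v : Fin n, 2 := by simp [mul_comm]
    _ ≤ _ := Finset.sum_le_sum fun v _ => hdeg v
  rw [degree_sum, hcard] at h1
  omega


lemma Fcnt_rec (n k : ℕ) :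
    Fcnt (n + 1) k ≤ ∑ j ∈ range (k + 1),
      if 2 ≤ j then k.choose j * Fcnt n (k - j) else 0 := by
  by_cases hn : n = 0
  · subst hn
    by_cases hk : 2 ≤ k
    · have h1 : Fcnt 1 k ≤ 1 := by
        calc Fcnt 1 k ≤ (univ : Finset (Fin k → Fin 1)).card := card_filter_le _ _
        _ = 1 := by simp [card_univ]
      have h2 : Fcnt 0 0 = 1 := by
        unfold Fcnt
        rw [filter_true_of_mem (fun w _ => fun v => absurd v.isLt (by omega))]
        simp [card_univ]
      calc Fcnt 1 k ≤ 1 := h1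
      _ ≤ if 2 ≤ k then k.choose k * Fcnt 0 (k - k) else 0 := by
          simp [hk, Nat.sub_self, h2]
      _ ≤ _ := by
          apply Finset.single_le_sum (f := fun j => if 2 ≤ j then k.choose j * Fcnt 0 (k - j) else 0)
            (fun i _ => by positivity) (self_mem_range_succ k)
    · have : Fcnt 1 k = 0 := by
        unfold Fcnt
        rw [card_eq_zero, filter_eq_empty_iff]
        intro w _
        push_neg
        refine ⟨0, ?_⟩
        calc (univ.filter fun i => w i = 0).card ≤ (univ : Finset (Fin k)).card :=
              card_filter_le _ _
        _ < 2 := by simpa using hk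
      simp [this]
  · -- n ≥ 1
    have hn1 : 1 ≤ n := by omega
    set P : (Fin k → Fin (n+1)) → Prop :=
      fun w => ∀ v, 2 ≤ (Finset.univ.filter fun i => w i = v).card with hP
    set A : Finset (Fin k → Fin (n+1)) := univ.filter P with hA
    set g : (Fin k → Fin (n+1)) → Finset (Fin k) :=
      fun w => univ.filter (fun i => w i = Fin.last n) with hg
    have hfib : A.card = ∑ S ∈ (univ : Finset (Finset (Fin k))),
        (A.filter fun w => g w = S).card :=
      card_eq_sum_card_fiberwise (fun x _ => mem_univ _)
    have hbound : ∀ S : Finset (Fin k),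
        (A.filter fun w => g w = S).card ≤
          if 2 ≤ S.card then Fcnt n (k - S.card) else 0 := by
      intro S
      by_cases hS : 2 ≤ S.card
      · simp only [hS, if_true]
        have hcompl : Sᶜ.card = k - S.card := by
          rw [card_compl, Fintype.card_fin]
        set iso := Sᶜ.orderIsoOfFin hcompl with hiso
        set junk : Fin n := ⟨0, hn1⟩ with hjunkdef
        set f : (Fin k → Fin (n+1)) → (Fin (k - S.card) → Fin n) :=
          fun w i => if h : (w (iso i) = Fin.last n) then junk
            else (w (iso i)).castPred h with hf
        unfold Fcnt
        apply card_le_card_of_injOn f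
        · -- maps to
          intro w hw
          simp only [mem_coe, mem_filter, mem_univ, true_and] at hw ⊢
          obtain ⟨hwA, hwS⟩ := hw
          rw [hA, mem_filter] at hwA
          obtain ⟨-, hwP⟩ := hwA
          intro v
          -- injection from fiber of castSucc v under w into fiber of v under f w
          have hv2 : 2 ≤ (univ.filter fun i => w i = Fin.castSucc v).card := hwP _
          have hne : (univ.filter fun i => w i = Fin.castSucc v).Nonempty := by
            rw [← card_pos]; omega
          obtain ⟨i₀, hi₀⟩ := hne
          have hmemC : ∀ i : Fin k, w i = Fin.castSucc v → i ∈ Sᶜ := by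
            intro i hi
            rw [← hwS, mem_compl, hg]
            simp only [mem_filter, mem_univ, true_and]
            rw [hi]
            exact (Fin.castSucc_lt_last v).ne
          set φ : Fin k → Fin (k - S.card) := fun i =>
            if h : i ∈ Sᶜ then iso.symm ⟨i, h⟩
            else iso.symm ⟨i₀, hmemC i₀ (by simpa using hi₀)⟩ with hφ
          apply le_trans hv2
          apply card_le_card_of_injOn φ
          · intro i hi
            simp only [mem_coe, mem_filter, mem_univ, true_and] at hi ⊢
            have hiC : i ∈ Sᶜ := hmemC i hi
            rw [hφ]
            simp only [hiC, dif_pos]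
            rw [hf]
            simp only
            have : (iso (iso.symm ⟨i, hiC⟩) : Fin k) = i := by
              rw [OrderIso.apply_symm_apply]
            rw [this, hi]
            rw [dif_neg (Fin.castSucc_lt_last v).ne]
            exact Fin.castPred_castSucc _
          · intro i hi j hj hij
            simp only [mem_coe, mem_filter, mem_univ, true_and] at hi hj
            have hiC : i ∈ Sᶜ := hmemC i hi
            have hjC : j ∈ Sᶜ := hmemC j hj
            rw [hφ] at hij
            simp only [hiC, hjC, dif_pos] at hij
            have := congrArg iso hij
            rw [OrderIso.apply_symm_apply, OrderIso.apply_symm_apply] at this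
            exact congrArg Subtype.val this
        · -- injective on the fiber
          intro w hw w' hw' heq
          simp only [mem_coe, mem_filter] at hw hw'
          obtain ⟨-, hwS⟩ := hw
          obtain ⟨-, hw'S⟩ := hw'
          funext i
          by_cases hiS : i ∈ S
          · have h1 : w i = Fin.last n := by
              have hi2 : i ∈ g w := by rw [hwS]; exact hiS
              rw [hg, mem_filter] at hi2
              exact hi2.2
            have h2 : w' i = Fin.last n := by
              have hi2 : i ∈ g w' := by rw [hw'S]; exact hiS
              rw [hg, mem_filter] at hi2
              exact hi2.2
            rw [h1, h2]
          · have hiC : i ∈ Sᶜ := mem_compl.mpr hiS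
            set i' := iso.symm ⟨i, hiC⟩ with hi'
            have hisoi' : (iso i' : Fin k) = i := by
              rw [hi', OrderIso.apply_symm_apply]
            have hwv : w i ≠ Fin.last n := by
              intro hcon
              apply hiS
              rw [← hwS, hg]
              simp [hcon]
            have hw'v : w' i ≠ Fin.last n := by
              intro hcon
              apply hiS
              rw [← hw'S, hg]
              simp [hcon]
            have := congrFun heq i'
            rw [hf] at this
            simp only at this
            rw [hisoi'] at this
            rw [dif_neg hwv, dif_neg hw'v] at this
            exact Fin.castPred_inj.mp this
      · simp only [hS, if_false, Nat.le_zero, card_eq_zero, filter_eq_empty_iff]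
        intro w hw
        rw [hA, mem_filter] at hw
        intro hgw
        have h2 := hw.2 (Fin.last n)
        change 2 ≤ (g w).card at h2
        rw [hgw] at h2
        exact hS h2
    calc Fcnt (n+1) k = A.card := rfl
    _ = _ := hfib
    _ ≤ ∑ S ∈ (univ : Finset (Finset (Fin k))),
          (if 2 ≤ S.card then Fcnt n (k - S.card) else 0) :=
        Finset.sum_le_sum fun S _ => hbound S
    _ = ∑ j ∈ range (k + 1), ∑ S ∈ (univ : Finset (Finset (Fin k))).filter
          (fun S => S.card = j), (if 2 ≤ S.card then Fcnt n (k - S.card) else 0) := by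
        rw [Finset.sum_fiberwise_of_maps_to]
        intro S _
        rw [mem_range]
        have := card_le_card (subset_univ S)
        rw [card_univ, Fintype.card_fin] at this
        omega
    _ = ∑ j ∈ range (k + 1), if 2 ≤ j then k.choose j * Fcnt n (k - j) else 0 := by
        apply Finset.sum_congr rfl
        intro j hj
        have hpc : (univ : Finset (Finset (Fin k))).filter (fun S => S.card = j)
            = Finset.powersetCard j univ := by
          ext S
          simp [Finset.mem_powersetCard, subset_univ]
        calc ∑ S ∈ (univ : Finset (Finset (Fin k))).filter (fun S => S.card = j),
              (if 2 ≤ S.card then Fcnt n (k - S.card) else 0)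
            = ∑ S ∈ (univ : Finset (Finset (Fin k))).filter (fun S => S.card = j),
              (if 2 ≤ j then Fcnt n (k - j) else 0) := by
              apply Finset.sum_congr rfl
              intro S hS
              rw [mem_filter] at hS
              rw [hS.2]
        _ = ((univ : Finset (Finset (Fin k))).filter (fun S => S.card = j)).card
              * (if 2 ≤ j then Fcnt n (k - j) else 0) := by
              rw [Finset.sum_const, smul_eq_mul]
        _ = k.choose j * (if 2 ≤ j then Fcnt n (k - j) else 0) := by
              rw [hpc, Finset.card_powersetCard, card_univ, Fintype.card_fin]
        _ = if 2 ≤ j then k.choose j * Fcnt n (k - j) else 0 := by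
              by_cases h2j : 2 ≤ j <;> simp [h2j]

lemma expz_nonneg {z : ℝ} (hz : 0 ≤ z) : 0 ≤ Real.exp z - 1 - z := by
  have := Real.add_one_le_exp z; linarith

lemma sum_trunc_le {z : ℝ} (hz : 0 < z) (k : ℕ) :
    ∑ j ∈ range (k + 1), (if 2 ≤ j then z ^ j / j.factorial else 0)
      ≤ Real.exp z - 1 - z := by
  by_cases hk : k = 0
  · subst hk
    simp
    have := Real.add_one_le_exp z; linarith
  · have hsplit := Finset.sum_filter_add_sum_filter_not (range (k+1))
      (fun j => 2 ≤ j) (fun j => z ^ j / j.factorial)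
    have h1 : ∑ j ∈ (range (k+1)).filter (fun j => 2 ≤ j), z ^ j / j.factorial
        = ∑ j ∈ range (k + 1), (if 2 ≤ j then z ^ j / j.factorial else 0) :=
      (Finset.sum_filter _ _)
    have h2 : (range (k+1)).filter (fun j => ¬ 2 ≤ j) = range 2 := by
      ext j; simp only [mem_filter, mem_range]; omega
    have h3 : ∑ j ∈ range 2, z ^ j / j.factorial = 1 + z := by
      rw [Finset.sum_range_succ, Finset.sum_range_one]
      norm_num [Nat.factorial]
    have h4 := Real.sum_le_exp_of_nonneg hz.le (k + 1)
    rw [h1, h2, h3] at hsplit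
    linarith
lemma Fcnt_le {z : ℝ} (hz : 0 < z) : ∀ (n k : ℕ),
    (Fcnt n k : ℝ) ≤ k.factorial * (Real.exp z - 1 - z) ^ n / z ^ k := by
  intro n
  induction n with
  | zero =>
    intro k
    cases k with
    | zero =>
      have : Fcnt 0 0 = 1 := by
        unfold Fcnt
        rw [filter_true_of_mem (fun w _ => fun v => absurd v.isLt (by omega))]
        simp [card_univ]
      rw [this]; norm_num
    | succ k =>
      have : Fcnt 0 (k+1) = 0 := by
        unfold Fcnt
        rw [card_eq_zero, filter_eq_empty_iff]
        intro w hw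
        exact absurd (w 0).isLt (by omega)
      rw [this]
      push_cast
      positivity
  | succ n ih =>
    intro k
    have step1 : (Fcnt (n+1) k : ℝ)
        ≤ ∑ j ∈ range (k + 1), (if 2 ≤ j then (k.choose j : ℝ) * Fcnt n (k - j) else 0) := by
      have := Fcnt_rec n k
      calc (Fcnt (n+1) k : ℝ) ≤ ((∑ j ∈ range (k + 1),
            if 2 ≤ j then k.choose j * Fcnt n (k - j) else 0 : ℕ) : ℝ) := by
            exact_mod_cast this
      _ = _ := by push_cast [apply_ite (Nat.cast : ℕ → ℝ)]; ring_nf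
    have step2 : ∑ j ∈ range (k + 1), (if 2 ≤ j then (k.choose j : ℝ) * Fcnt n (k - j) else 0)
        ≤ ∑ j ∈ range (k + 1), (if 2 ≤ j then
            (k.factorial * (Real.exp z - 1 - z) ^ n / z ^ k) * (z ^ j / j.factorial) else 0) := by
      apply Finset.sum_le_sum
      intro j hj
      rw [mem_range] at hj
      by_cases h2j : 2 ≤ j
      · simp only [h2j, if_true]
        have hjk : j ≤ k := by omega
        calc (k.choose j : ℝ) * Fcnt n (k - j)
            ≤ (k.choose j : ℝ) * ((k-j).factorial * (Real.exp z - 1 - z) ^ n / z ^ (k-j)) := by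
              apply mul_le_mul_of_nonneg_left (ih (k - j)) (by positivity)
        _ = (k.factorial * (Real.exp z - 1 - z) ^ n / z ^ k) * (z ^ j / j.factorial) := by
              have hfac : (k.choose j : ℝ) * j.factorial * (k-j).factorial = k.factorial := by
                exact_mod_cast Nat.choose_mul_factorial_mul_factorial hjk
              have hzz : z ^ (k - j) * z ^ j = z ^ k := by
                rw [← pow_add]; congr 1; omega
              field_simp
              linear_combination (Real.exp z - 1 - z)^n * z^k * hfac
                - (k.factorial:ℝ) * (Real.exp z - 1 - z)^n * hzz
      · simp [h2j]
    have step3 : ∑ j ∈ range (k + 1), (if 2 ≤ j then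
            (k.factorial * (Real.exp z - 1 - z) ^ n / z ^ k) * (z ^ j / j.factorial) else 0)
        = (k.factorial * (Real.exp z - 1 - z) ^ n / z ^ k) *
            ∑ j ∈ range (k + 1), (if 2 ≤ j then (z ^ j / j.factorial) else 0) := by
      rw [Finset.mul_sum]
      apply Finset.sum_congr rfl
      intro j _
      by_cases h2j : 2 ≤ j <;> simp [h2j]
    have step4 : (k.factorial * (Real.exp z - 1 - z) ^ n / z ^ k) *
            (∑ j ∈ range (k + 1), (if 2 ≤ j then (z ^ j / j.factorial) else 0))
        ≤ (k.factorial * (Real.exp z - 1 - z) ^ n / z ^ k) * (Real.exp z - 1 - z) := by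
      apply mul_le_mul_of_nonneg_left (sum_trunc_le hz k)
      exact div_nonneg (mul_nonneg (Nat.cast_nonneg _) (pow_nonneg (expz_nonneg hz.le) n))
        (pow_nonneg hz.le k)
    calc (Fcnt (n+1) k : ℝ) ≤ _ := step1
    _ ≤ _ := step2
    _ = _ := step3
    _ ≤ _ := step4
    _ = k.factorial * (Real.exp z - 1 - z) ^ (n+1) / z ^ k := by ring

lemma exp_le_inv_one_sub {x : ℝ} (h0 : 0 ≤ x) (h1 : x < 1) :
    Real.exp x ≤ (1 - x)⁻¹ := by
  rw [le_inv_comm₀ (Real.exp_pos x) (by linarith)]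
  calc (1 - x) = (-x) + 1 := by ring
  _ ≤ Real.exp (-x) := Real.add_one_le_exp _
  _ = (Real.exp x)⁻¹ := by rw [Real.exp_neg]

lemma factorial_le_real : ∀ k : ℕ, 1 ≤ k →
    (k.factorial : ℝ) ≤ Real.exp 1 * k * (k / Real.exp 1) ^ k := by
  intro k
  induction k with
  | zero => omega
  | succ k ih =>
    intro _
    rcases Nat.eq_or_lt_of_le (Nat.one_le_iff_ne_zero.mpr (Nat.succ_ne_zero k)) with h | h
    · have : k = 0 := by omega
      subst this
      simp
    · have hk1 : 1 ≤ k := by omega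
      have hkpos : (0:ℝ) < k := by exact_mod_cast hk1
      have he : (0:ℝ) < Real.exp 1 := Real.exp_pos 1
      have key : Real.exp 1 ≤ ((k+1:ℝ)/k) ^ (k+1) := by
        have h2 : Real.exp ((k+1:ℝ)⁻¹) ≤ (1 - (k+1:ℝ)⁻¹)⁻¹ := by
          apply exp_le_inv_one_sub (by positivity)
          rw [inv_lt_one_iff₀]; right; exact_mod_cast by omega
        have h3 : (1 - (k+1:ℝ)⁻¹)⁻¹ = (k+1:ℝ)/k := by
          have h4 : (1 - ((k:ℝ)+1)⁻¹) = (k:ℝ)/((k:ℝ)+1) := by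
            field_simp; ring
          rw [h4, inv_div]
        rw [h3] at h2
        calc Real.exp 1 = (Real.exp ((k+1:ℝ)⁻¹)) ^ (k+1) := by
              rw [← Real.exp_nat_mul]
              norm_num
              rw [mul_inv_cancel₀ (by positivity : ((k:ℝ)+1) ≠ 0)]
        _ ≤ ((k+1:ℝ)/k) ^ (k+1) := by
              apply pow_le_pow_left₀ (le_of_lt (Real.exp_pos _)) h2
      have step : (k:ℝ) * ((k:ℝ)/Real.exp 1) ^ k ≤ ((k+1:ℝ)/Real.exp 1) ^ (k+1) := by
        rw [div_pow, div_pow, ← mul_div_assoc, div_le_div_iff₀ (by positivity) (by positivity)]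
        calc (k:ℝ) * (k:ℝ)^k * Real.exp 1 ^ (k+1)
            = ((k:ℝ)^(k+1) * Real.exp 1) * Real.exp 1 ^ k := by ring
        _ ≤ ((k:ℝ)^(k+1) * ((k+1:ℝ)/k) ^ (k+1)) * Real.exp 1 ^ k := by
              apply mul_le_mul_of_nonneg_right _ (by positivity)
              exact mul_le_mul_of_nonneg_left key (by positivity)
        _ = (k+1:ℝ)^(k+1) * Real.exp 1 ^ k := by
              rw [div_pow]
              field_simp
      calc ((k+1).factorial : ℝ) = (k+1 : ℝ) * k.factorial := by
            rw [Nat.factorial_succ]; push_cast; ring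
      _ ≤ (k+1:ℝ) * (Real.exp 1 * k * ((k:ℝ)/Real.exp 1) ^ k) := by
            apply mul_le_mul_of_nonneg_left (ih hk1) (by positivity)
      _ = Real.exp 1 * (k+1:ℝ) * ((k:ℝ) * ((k:ℝ)/Real.exp 1) ^ k) := by ring
      _ ≤ Real.exp 1 * (k+1:ℝ) * (((k+1:ℝ))/Real.exp 1) ^ (k+1) := by
            apply mul_le_mul_of_nonneg_left step (by positivity)
      _ = Real.exp 1 * ((k+1:ℕ):ℝ) * (((k+1:ℕ):ℝ)/Real.exp 1) ^ (k+1) := by push_cast; ring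

lemma sym2_eq_mk {n : ℕ} (e : Sym2 (Fin n)) : e = s(e.inf, e.sup) := by
  induction e using Sym2.ind with
  | _ a b =>
    rcases le_total a b with h | h
    · rw [Sym2.inf_mk, Sym2.sup_mk, inf_of_le_left h, sup_of_le_right h]
    · rw [Sym2.inf_mk, Sym2.sup_mk, inf_of_le_right h, sup_of_le_left h,
        Sym2.eq_swap]

lemma inf_ne_sup {n : ℕ} {e : Sym2 (Fin n)} (he : ¬ e.IsDiag) : e.inf ≠ e.sup := by
  intro h
  apply he
  rw [sym2_eq_mk e, Sym2.mk_isDiag_iff]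
  exact h

lemma mem_iff_inf_sup {n : ℕ} {e : Sym2 (Fin n)} {v : Fin n} :
    v ∈ e ↔ v = e.inf ∨ v = e.sup := by
  conv_lhs => rw [sym2_eq_mk e]
  exact Sym2.mem_iff

/-- The word associated to a graph with an edge ordering and orientations. -/
noncomputable def mkw {n m : ℕ} (E : Finset (PotEdge n))
    (σ : {e : PotEdge n // e ∈ E} ≃ Fin m) (ε : Fin m → Bool) :
    Fin (2 * m) → Fin n := fun i =>
  let j : Fin m := ⟨i.val / 2, by have := i.isLt; omega⟩
  let e : Sym2 (Fin n) := ((σ.symm j).1).1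
  if i.val % 2 = 0 then (if ε j then e.inf else e.sup)
  else (if ε j then e.sup else e.inf)

lemma mkw_even {n m : ℕ} (E : Finset (PotEdge n))
    (σ : {e : PotEdge n // e ∈ E} ≃ Fin m) (ε : Fin m → Bool) (j : Fin m)
    (h : 2 * j.val < 2 * m) :
    mkw E σ ε ⟨2 * j.val, h⟩
      = (if ε j then ((σ.symm j).1).1.inf else ((σ.symm j).1).1.sup) := by
  have h2 : (2 * j.val) / 2 = j.val := by omega
  have h3 : (2 * j.val) % 2 = 0 := by omega
  simp only [mkw, h2, h3, Fin.eta, if_true]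

lemma mkw_odd {n m : ℕ} (E : Finset (PotEdge n))
    (σ : {e : PotEdge n // e ∈ E} ≃ Fin m) (ε : Fin m → Bool) (j : Fin m)
    (h : 2 * j.val + 1 < 2 * m) :
    mkw E σ ε ⟨2 * j.val + 1, h⟩
      = (if ε j then ((σ.symm j).1).1.sup else ((σ.symm j).1).1.inf) := by
  have h2 : (2 * j.val + 1) / 2 = j.val := by omega
  have h3 : ¬ ((2 * j.val + 1) % 2 = 0) := by omega
  simp only [mkw, h2, h3, Fin.eta, if_false]

lemma mkw_pair {n m : ℕ} (E : Finset (PotEdge n))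
    (σ : {e : PotEdge n // e ∈ E} ≃ Fin m) (ε : Fin m → Bool) (j : Fin m)
    (h : 2 * j.val < 2 * m) (h' : 2 * j.val + 1 < 2 * m) :
    s(mkw E σ ε ⟨2 * j.val, h⟩, mkw E σ ε ⟨2 * j.val + 1, h'⟩) = ((σ.symm j).1).1 := by
  rw [mkw_even, mkw_odd]
  cases hb : ε j
  · simp only [Bool.false_eq_true, if_false]
    rw [Sym2.eq_swap]
    exact (sym2_eq_mk _).symm
  · simp only [if_true]
    exact (sym2_eq_mk _).symm

lemma card_of_mem_graphs {n m : ℕ} {E : Finset (PotEdge n)}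
    (hE : E ∈ graphsWithEdgesMinDeg2 n m) : E.card = m := by
  rw [graphsWithEdgesMinDeg2, mem_filter, graphsWithEdges, mem_filter] at hE
  exact hE.1.2

lemma deg_of_mem_graphs {n m : ℕ} {E : Finset (PotEdge n)}
    (hE : E ∈ graphsWithEdgesMinDeg2 n m) :
    ∀ v : Fin n, 2 ≤ (E.filter fun e => v ∈ e.1).card := by
  rw [graphsWithEdgesMinDeg2, mem_filter] at hE
  exact hE.2

lemma mkw_deg {n m : ℕ} {E : Finset (PotEdge n)} (hE : E ∈ graphsWithEdgesMinDeg2 n m)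
    (σ : {e : PotEdge n // e ∈ E} ≃ Fin m) (ε : Fin m → Bool) :
    ∀ v, 2 ≤ (Finset.univ.filter fun i => mkw E σ ε i = v).card := by
  intro v
  have hdeg := deg_of_mem_graphs hE v
  have hm1 : 1 ≤ m := by
    have h1 : (E.filter fun e => v ∈ e.1).card ≤ E.card := card_filter_le _ _
    have h2 := card_of_mem_graphs hE
    omega
  have hlt : ∀ j : Fin m, 2 * j.val < 2 * m := fun j => by have := j.isLt; omega
  have hlt' : ∀ j : Fin m, 2 * j.val + 1 < 2 * m := fun j => by have := j.isLt; omega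
  set ψ : PotEdge n → Fin (2 * m) := fun e' =>
    if h : e' ∈ E then
      (if mkw E σ ε ⟨2 * (σ ⟨e', h⟩).val, hlt _⟩ = v
        then ⟨2 * (σ ⟨e', h⟩).val, hlt _⟩ else ⟨2 * (σ ⟨e', h⟩).val + 1, hlt' _⟩)
    else ⟨0, by omega⟩ with hψ
  refine le_trans hdeg ?_
  apply card_le_card_of_injOn ψ
  · intro e' he'
    rw [mem_coe, mem_filter] at he'
    obtain ⟨heE, hev⟩ := he'
    rw [mem_coe, mem_filter]
    refine ⟨mem_univ _, ?_⟩
    rw [hψ]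
    simp only [heE, dif_pos]
    by_cases hc : mkw E σ ε ⟨2 * (σ ⟨e', heE⟩).val, hlt _⟩ = v
    · rw [if_pos hc]; exact hc
    · rw [if_neg hc]
      -- v is an endpoint of e'; the even position is not v, so the odd one is
      have hsymm : σ.symm (σ ⟨e', heE⟩) = ⟨e', heE⟩ := Equiv.symm_apply_apply _ _
      have hvmem : v = e'.1.inf ∨ v = e'.1.sup := mem_iff_inf_sup.mp hev
      rw [mkw_odd]
      rw [mkw_even] at hc
      rw [hsymm] at hc ⊢
      cases hb : ε (σ ⟨e', heE⟩)
      · rw [hb] at hc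
        simp only [Bool.false_eq_true, if_false] at hc ⊢
        rcases hvmem with h | h
        · exact h.symm
        · exact absurd h.symm hc
      · rw [hb] at hc
        simp only [if_true] at hc ⊢
        rcases hvmem with h | h
        · exact absurd h.symm hc
        · exact h.symm
  · intro e₁ h₁ e₂ h₂ heq
    simp only [mem_coe, mem_filter] at h₁ h₂
    obtain ⟨h₁E, -⟩ := h₁
    obtain ⟨h₂E, -⟩ := h₂
    rw [hψ] at heq
    simp only [h₁E, h₂E, dif_pos] at heq
    have hval : ∀ (e : PotEdge n) (hee : e ∈ E),
        ((if mkw E σ ε ⟨2 * (σ ⟨e, hee⟩).val, hlt _⟩ = v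
        then (⟨2 * (σ ⟨e, hee⟩).val, hlt _⟩ : Fin (2*m))
        else ⟨2 * (σ ⟨e, hee⟩).val + 1, hlt' _⟩)).val / 2 = (σ ⟨e, hee⟩).val := by
      intro e he
      by_cases hc : mkw E σ ε ⟨2 * (σ ⟨e, he⟩).val, hlt _⟩ = v
      · rw [if_pos hc]; simp only [Fin.val_mk]; omega
      · rw [if_neg hc]; simp only [Fin.val_mk]; omega
    have hveq := congrArg Fin.val heq
    have hdiv : ((if mkw E σ ε ⟨2 * (σ ⟨e₁, h₁E⟩).val, hlt _⟩ = v
        then (⟨2 * (σ ⟨e₁, h₁E⟩).val, hlt _⟩ : Fin (2*m))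
        else ⟨2 * (σ ⟨e₁, h₁E⟩).val + 1, hlt' _⟩)).val / 2
        = ((if mkw E σ ε ⟨2 * (σ ⟨e₂, h₂E⟩).val, hlt _⟩ = v
        then (⟨2 * (σ ⟨e₂, h₂E⟩).val, hlt _⟩ : Fin (2*m))
        else ⟨2 * (σ ⟨e₂, h₂E⟩).val + 1, hlt' _⟩)).val / 2 := by rw [heq]
    rw [hval e₁ h₁E, hval e₂ h₂E] at hdiv
    have hj : σ ⟨e₁, h₁E⟩ = σ ⟨e₂, h₂E⟩ := Fin.ext hdiv
    have := σ.injective hj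
    exact congrArg Subtype.val this

lemma mem_iff_mkw {n m : ℕ} (E : Finset (PotEdge n))
    (σ : {e : PotEdge n // e ∈ E} ≃ Fin m) (ε : Fin m → Bool) (x : PotEdge n) :
    x ∈ E ↔ ∃ j : Fin m,
      s(mkw E σ ε ⟨2 * j.val, by have := j.isLt; omega⟩,
        mkw E σ ε ⟨2 * j.val + 1, by have := j.isLt; omega⟩) = x.1 := by
  constructor
  · intro hx
    refine ⟨σ ⟨x, hx⟩, ?_⟩
    rw [mkw_pair, Equiv.symm_apply_apply]
  · rintro ⟨j, hj⟩
    rw [mkw_pair] at hj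
    have : ((σ.symm j : {e : PotEdge n // e ∈ E}) : PotEdge n) = x := Subtype.ext hj
    exact this ▸ (σ.symm j).2

lemma key_count (n m : ℕ) :
    (graphsWithEdgesMinDeg2 n m).card * (2 ^ m * m.factorial) ≤ Fcnt n (2 * m) := by
  classical
  set s := graphsWithEdgesMinDeg2 n m with hs
  have hcardE : ∀ E : {E : Finset (PotEdge n) // E ∈ s},
      Fintype.card {e : PotEdge n // e ∈ E.1} = m := by
    intro E
    rw [Fintype.card_coe]
    exact card_of_mem_graphs E.2
  have hT : Fintype.card (Σ E : {E : Finset (PotEdge n) // E ∈ s},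
      (({e : PotEdge n // e ∈ E.1} ≃ Fin m) × (Fin m → Bool)))
      = s.card * (2 ^ m * m.factorial) := by
    rw [Fintype.card_sigma]
    have hper : ∀ E : {E : Finset (PotEdge n) // E ∈ s},
        Fintype.card ((({e : PotEdge n // e ∈ E.1} ≃ Fin m) × (Fin m → Bool)))
          = 2 ^ m * m.factorial := by
      intro E
      rw [Fintype.card_prod, Fintype.card_equiv (Fintype.equivFinOfCardEq (hcardE E)),
        hcardE E]
      simp [Fintype.card_fun, mul_comm]
    rw [Finset.sum_congr rfl (fun E _ => hper E), Finset.sum_const, smul_eq_mul, card_univ,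
      Fintype.card_coe]
  set Φ : (Σ E : {E : Finset (PotEdge n) // E ∈ s},
      (({e : PotEdge n // e ∈ E.1} ≃ Fin m) × (Fin m → Bool))) →
      {w : Fin (2*m) → Fin n // ∀ v, 2 ≤ (Finset.univ.filter fun i => w i = v).card} :=
    fun a => ⟨mkw a.1.1 a.2.1 a.2.2, mkw_deg a.1.2 a.2.1 a.2.2⟩ with hΦ
  have hinj : Function.Injective Φ := by
    rintro ⟨⟨E, hE⟩, σ, ε⟩ ⟨⟨E', hE'⟩, σ', ε'⟩ h
    have hw : mkw E σ ε = mkw E' σ' ε' := congrArg Subtype.val h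
    have hEE : E = E' := by
      ext x
      rw [mem_iff_mkw E σ ε x, mem_iff_mkw E' σ' ε' x, hw]
    subst hEE
    have hσ : σ = σ' := by
      have hsymm_eq : ∀ j, σ.symm j = σ'.symm j := by
        intro j
        apply Subtype.ext
        apply Subtype.ext
        have h1 := mkw_pair E σ ε j (by have := j.isLt; omega) (by have := j.isLt; omega)
        have h2 := mkw_pair E σ' ε' j (by have := j.isLt; omega) (by have := j.isLt; omega)
        rw [← h1, ← h2, hw]
      apply Equiv.ext
      intro x
      have h3 := hsymm_eq (σ x)
      rw [Equiv.symm_apply_apply] at h3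
      calc σ x = σ' (σ'.symm (σ x)) := (Equiv.apply_symm_apply _ _).symm
      _ = σ' x := by rw [← h3]
    subst hσ
    have hε : ε = ε' := by
      funext j
      have h1 := mkw_even E σ ε j (by have := j.isLt; omega)
      have h2 := mkw_even E σ ε' j (by have := j.isLt; omega)
      rw [hw] at h1
      rw [h1] at h2
      have hns := inf_ne_sup ((σ.symm j : {e : PotEdge n // e ∈ E}) : PotEdge n).2
      cases hb : ε j <;> cases hb' : ε' j <;> rw [hb, hb'] at h2 <;>
        simp only [Bool.false_eq_true, if_true, if_false] at h2
      · exact absurd h2.symm hns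
      · exact absurd h2 hns
    subst hε
    rfl
  have hle := Fintype.card_le_of_injective Φ hinj
  rw [hT, Fintype.card_subtype] at hle
  exact le_trans hle (le_of_eq rfl)


lemma inv_one_sub_le_exp {t : ℝ} (h0 : 0 ≤ t) (h2 : t ≤ 1/2) :
    (1 - t)⁻¹ ≤ Real.exp (2 * t) := by
  rw [inv_le_iff_one_le_mul₀ (by linarith)]
  nlinarith [Real.add_one_le_exp (2*t), Real.exp_pos (2*t)]

lemma poly_log_le {a : ℝ} (ha : 0 < a) (k : ℕ) :
    ∀ᶠ (n : ℕ) in atTop, a * (Real.log n)^k ≤ n := by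
  have h0 : Tendsto (fun x : ℝ => Real.log x ^ k / (1 * x + 0)) atTop (nhds 0) :=
    Real.tendsto_pow_log_div_mul_add_atTop 1 0 k one_ne_zero
  have h1 : ∀ᶠ x : ℝ in atTop, Real.log x ^ k / (1 * x + 0) ≤ a⁻¹ := by
    have hpos : (0:ℝ) < a⁻¹ := by positivity
    filter_upwards [h0.eventually (eventually_le_nhds hpos)] with x hx using hx
  have h2 : ∀ᶠ x : ℝ in atTop, a * Real.log x ^ k ≤ x := by
    filter_upwards [h1, eventually_gt_atTop (0:ℝ)] with x hx hxpos
    rw [div_le_iff₀ (by linarith)] at hx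
    calc a * Real.log x ^ k ≤ a * (a⁻¹ * (1 * x + 0)) :=
          mul_le_mul_of_nonneg_left hx (by positivity)
    _ = x := by field_simp; ring
  exact tendsto_natCast_atTop_atTop.eventually h2

lemma eventual_facts (C : ℝ) (hC : 0 < C) (D : ℕ) :
    ∀ᶠ (n : ℕ) in atTop,
      (1 ≤ Real.log (Real.log n)) ∧
      ((1 + 2*C)^2 * (Real.log n)^(D+2) ≤ n) ∧
      (2*(1 + 2*C*Real.log (Real.log n)) + 2 ≤ n) ∧ 1 ≤ n := by
  have hlog : Tendsto (fun n : ℕ => Real.log (Real.log n)) atTop atTop :=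
    (Real.tendsto_log_atTop.comp Real.tendsto_log_atTop).comp tendsto_natCast_atTop_atTop
  have hg : Tendsto (fun n : ℕ => Real.log n) atTop atTop :=
    Real.tendsto_log_atTop.comp tendsto_natCast_atTop_atTop
  have e1 := hlog.eventually_ge_atTop 1
  have e2 := poly_log_le (by positivity : (0:ℝ) < (1+2*C)^2) (D+2)
  have e3' := poly_log_le (by positivity : (0:ℝ) < 4+4*C) 1
  have eg := hg.eventually_ge_atTop 1
  have e4 := eventually_ge_atTop (1:ℕ)
  filter_upwards [e1, e2, e3', eg, e4] with n h1 h2 h3 hgn h4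
  refine ⟨h1, h2, ?_, h4⟩
  have hL : Real.log (Real.log n) ≤ Real.log n := Real.log_le_self (by linarith)
  rw [pow_one] at h3
  nlinarith [h3, hgn, hL, hC.le]

set_option maxHeartbeats 1600000 in
/-- For `n` sufficiently large and `m = O(n log log n)`, if
`G ~ G(n,m)` is a uniformly random graph on `[n]` with `m` edges, then
`P(δ(G) ≥ 2) ≤ n·exp(-2m·e^{-2m/n})`; stated here without division, as a bound on the
number of such graphs with minimum degree at least 2 against the total number. -/
theorem stmt13 (C : ℝ) (hC : 0 < C) :
    ∃ N : ℕ, ∀ n ≥ N, ∀ m : ℕ,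
      (m : ℝ) ≤ C * n * Real.log (Real.log n) →
      ((graphsWithEdgesMinDeg2 n m).card : ℝ)
        ≤ n * Real.exp (-(2 * m) * Real.exp (-(2 * m) / n))
            * ((graphsWithEdges n m).card : ℝ) := by
  classical
  set D : ℕ := ⌈2*C⌉₊ with hD
  obtain ⟨N, hN⟩ := eventually_atTop.mp (eventual_facts C hC D)
  refine ⟨N, fun n hn m hm => ?_⟩
  obtain ⟨hL1, hF2, hF3, hn1⟩ := hN n hn
  by_cases hmn : m < n
  · -- no graphs with min degree 2
    have hempty : graphsWithEdgesMinDeg2 n m = ∅ := by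
      rw [eq_empty_iff_forall_notMem]
      intro E hE
      exact absurd (minDeg2_n_le_m hE) (by omega)
    rw [hempty]
    simp only [card_empty, Nat.cast_zero]
    positivity
  · have hnm : n ≤ m := le_of_not_gt hmn
    have hn0 : (0:ℝ) < n := by exact_mod_cast hn1
    have hm1 : 1 ≤ m := le_trans hn1 hnm
    have hm0 : (0:ℝ) < m := by exact_mod_cast hm1
    have hnmR : (n:ℝ) ≤ m := by exact_mod_cast hnm
    have hg0 : 0 ≤ Real.log n := Real.log_nonneg (by exact_mod_cast hn1)
    have hgpos : 0 < Real.log n := by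
      rcases eq_or_lt_of_le hg0 with h | h
      · exfalso; rw [← h, Real.log_zero] at hL1; linarith
      · exact h
    have hge : Real.exp 1 ≤ Real.log n := by
      rw [← Real.exp_log hgpos]
      exact Real.exp_le_exp.mpr hL1
    have hg1 : 1 ≤ Real.log n := le_trans (Real.one_le_exp (by norm_num)) hge
    have hLg : Real.log (Real.log n) ≤ Real.log n := Real.log_le_self hg0
    have hL0 : 0 ≤ Real.log (Real.log n) := le_trans zero_le_one hL1
    have hmCnL : (m:ℝ) ≤ C * n * Real.log (Real.log n) := hm
    set lam : ℝ := 2*m/n with hlam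
    have hlam0 : 0 < lam := by positivity
    have hn1R : (1:ℝ) ≤ n := by exact_mod_cast hn1
    have hlamle : lam ≤ 2*C*Real.log (Real.log n) := by
      rw [hlam, div_le_iff₀ hn0]
      have h1 : 2*(m:ℝ) ≤ 2*(C * n * Real.log (Real.log n)) := by linarith
      have h2 : 2*(C * (n:ℝ) * Real.log (Real.log n)) = 2*C*Real.log (Real.log n) * n := by ring
      linarith
    have h2CD : 2*C ≤ D := Nat.le_ceil _
    -- counting quantities
    set Mc : ℕ := n.choose 2 with hMcdef
    have hMc : (Mc:ℝ) = n*(n-1)/2 := Nat.cast_choose_two ℝ n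
    have hmMc : m ≤ Mc := by
      have : (m:ℝ) ≤ (Mc:ℝ) := by
        rw [hMc]
        have hprod : (n:ℝ)*(C*Real.log (Real.log n)) ≤ (n:ℝ)*(((n:ℝ)-2)/4) := by
          apply mul_le_mul_of_nonneg_left _ hn0.le
          have hCL0 : 0 ≤ C*Real.log (Real.log n) := by positivity
          linarith [hF3]
        have he1 : C * (n:ℝ) * Real.log (Real.log n) = (n:ℝ)*(C*Real.log (Real.log n)) := by ring
        have he2 : (n:ℝ)*(((n:ℝ)-2)/4) = ((n:ℝ)^2 - 2*n)/4 := by ring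
        have he3 : (n:ℝ)*((n:ℝ)-1)/2 = ((n:ℝ)^2 - (n:ℝ))/2 := by ring
        have hsq : (0:ℝ) ≤ (n:ℝ)^2 := sq_nonneg _
        linarith [hmCnL]
      exact_mod_cast this
    set bn : ℕ := 2*(Mc + 1 - m) with hbndef
    have hbn : (bn:ℝ) = (n:ℝ)^2 - n + 2 - 2*m := by
      rw [hbndef]
      push_cast [Nat.cast_sub (by omega : m ≤ Mc + 1)]
      rw [hMc]; ring
    have hedges : (graphsWithEdges n m).card = Mc.choose m := by
      have h1 : graphsWithEdges n m = Finset.powersetCard m univ := by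
        ext E
        rw [graphsWithEdges, mem_filter, Finset.mem_powersetCard]
        constructor
        · exact fun h => ⟨subset_univ _, h.2⟩
        · exact fun h => ⟨mem_univ _, h.2⟩
      rw [h1, Finset.card_powersetCard, card_univ]
      congr 1
      rw [Sym2.card_subtype_not_diag, Fintype.card_fin]
    have hTlow : ((Mc + 1 - m : ℕ):ℝ)^m ≤ (m.factorial : ℝ) * (Mc.choose m) := by
      have h1 : (Mc + 1 - m)^m ≤ Mc.descFactorial m := Nat.pow_sub_le_descFactorial Mc m
      have h2 : Mc.descFactorial m = m.factorial * Mc.choose m :=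
        Nat.descFactorial_eq_factorial_mul_choose Mc m
      exact_mod_cast h2 ▸ h1
    -- the analytic quantities
    set E : ℝ := Real.exp lam - 1 - lam with hE
    have hA : ((graphsWithEdgesMinDeg2 n m).card : ℝ) * (2^m * m.factorial)
        ≤ (Fcnt n (2*m) : ℝ) := by
      have := key_count n m
      exact_mod_cast this
    have hB : (Fcnt n (2*m) : ℝ) ≤ ((2*m).factorial : ℝ) * E^n / lam^(2*m) :=
      Fcnt_le hlam0 n (2*m)
    have hexparg : -(2*(m:ℝ)) / (n:ℝ) = -lam := by rw [hlam]; ring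
    have hMain2 : ((2*m).factorial : ℝ) * E^n / lam^(2*m)
        ≤ (n:ℝ) * Real.exp (-(2*m) * Real.exp (-lam)) * (bn:ℝ)^m := by
      set X : ℝ := ((n:ℝ) + 2*m) * Real.exp (-lam) with hX
      have h2m1 : 1 ≤ 2*m := by omega
      have step1 : (((2*m).factorial : ℕ) : ℝ)
          ≤ Real.exp 1 * ((2*m : ℕ) : ℝ) * (((2*m : ℕ) : ℝ)/Real.exp 1)^(2*m) :=
        factorial_le_real (2*m) h2m1
      have hid : E = Real.exp lam * (1 - (1+lam) * Real.exp (-lam)) := by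
        rw [hE, Real.exp_neg]
        field_simp
        ring
      have h1e : (1+lam) * Real.exp (-lam) ≤ 1 := by
        rw [Real.exp_neg, ← div_eq_mul_inv, div_le_one (Real.exp_pos lam)]
        linarith [Real.add_one_le_exp lam]
      have hE0 : 0 ≤ E := by
        rw [hid]
        exact mul_nonneg (Real.exp_pos lam).le (by linarith)
      have step2 : E^n ≤ Real.exp (2*(m:ℝ) - X) := by
        have hle : E ≤ Real.exp (lam - (1+lam)*Real.exp (-lam)) := by
          have hsplit2 : Real.exp (lam - (1+lam)*Real.exp (-lam))
              = Real.exp lam * Real.exp (-((1+lam)*Real.exp (-lam))) := by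
            rw [← Real.exp_add]
            congr 1
            try ring
          rw [hid, hsplit2]
          exact mul_le_mul_of_nonneg_left (Real.one_sub_le_exp_neg _) (Real.exp_pos lam).le
        calc E^n ≤ (Real.exp (lam - (1+lam)*Real.exp (-lam)))^n := pow_le_pow_left₀ hE0 hle n
        _ = Real.exp ((n:ℝ) * (lam - (1+lam)*Real.exp (-lam))) := by
            rw [← Real.exp_nat_mul]
        _ = Real.exp (2*(m:ℝ) - X) := by
            congr 1
            rw [hX, hlam]
            field_simp
            try ring
      have step3 : ((2*m).factorial : ℝ) * E^n / lam^(2*m)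
          ≤ Real.exp 1 * (2*(m:ℝ)) * (n:ℝ)^(2*m) * Real.exp (-X) := by
        have hlp : (0:ℝ) < lam^(2*m) := pow_pos hlam0 _
        rw [div_le_iff₀ hlp]
        have hprod : ((2*m).factorial:ℝ) * E^n
            ≤ (Real.exp 1 * ((2*m:ℕ):ℝ) * (((2*m:ℕ):ℝ)/Real.exp 1)^(2*m)) * Real.exp (2*(m:ℝ) - X) :=
          mul_le_mul step1 step2 (pow_nonneg hE0 n) (by positivity)
        refine le_trans hprod (le_of_eq ?_)
        have i1 : (((2*m:ℕ):ℝ)/Real.exp 1)^(2*m)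
            = ((2*(m:ℝ))^(2*m)) / Real.exp (2*(m:ℝ)) := by
          rw [div_pow, Real.exp_one_pow]
          norm_cast
        have i2 : Real.exp (2*(m:ℝ) - X) = Real.exp (2*(m:ℝ)) * Real.exp (-X) := by
          rw [← Real.exp_add]
          congr 1
          try ring
        have i3 : lam^(2*m) = ((2*(m:ℝ))^(2*m)) / (n:ℝ)^(2*m) := by
          rw [hlam, div_pow]
        have hc : ((2*m:ℕ):ℝ) = 2*(m:ℝ) := by push_cast; ring
        rw [i1, i2, i3, hc]
        have hEn : Real.exp (2*(m:ℝ)) ≠ 0 := Real.exp_ne_zero _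
        have hnp : ((n:ℝ))^(2*m) ≠ 0 := by positivity
        field_simp
      refine le_trans step3 ?_
      -- step4
      have hsplit : Real.exp (-X) = Real.exp (-(2*(m:ℝ)) * Real.exp (-lam))
          * Real.exp (-((n:ℝ) * Real.exp (-lam))) := by
        rw [← Real.exp_add, hX]
        congr 1
        ring
      have hnn : (n:ℝ)^(2*m) = ((n:ℝ)^2)^m := by rw [← pow_mul]
      set t : ℝ := ((n:ℝ) - 2 + 2*m)/(n:ℝ)^2 with ht
      have hn1R' : (1:ℝ) ≤ n := by exact_mod_cast hn1
      have hnum0 : (0:ℝ) ≤ (n:ℝ) - 2 + 2*m := by linarith [hnmR]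
      have ht0 : 0 ≤ t := div_nonneg hnum0 (by positivity)
      have h2mnu : 2*(m:ℝ) ≤ (n:ℝ)*(2*C*Real.log (Real.log n)) := by
        have h1 : 2*(m:ℝ) ≤ 2*(C * n * Real.log (Real.log n)) := by linarith
        have h2 : 2*(C * (n:ℝ) * Real.log (Real.log n)) = (n:ℝ)*(2*C*Real.log (Real.log n)) := by
          ring
        linarith
      have ht2 : t ≤ 1/2 := by
        rw [ht, div_le_iff₀ (by positivity)]
        have hA1 : (n:ℝ)*(1+2*C*Real.log (Real.log n)) ≤ (n:ℝ)*(((n:ℝ)-2)/2) := by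
          apply mul_le_mul_of_nonneg_left _ hn0.le
          linarith [hF3]
        have hA2 : (n:ℝ)*(1+2*C*Real.log (Real.log n))
            = (n:ℝ) + (n:ℝ)*(2*C*Real.log (Real.log n)) := by ring
        have hA3 : (n:ℝ)*(((n:ℝ)-2)/2) = 1/2*(n:ℝ)^2 - (n:ℝ) := by ring
        linarith [h2mnu]
      have hbt : (bn:ℝ) = (n:ℝ)^2 * (1 - t) := by
        rw [hbn, ht]
        field_simp
        ring
      have hbn0 : (0:ℝ) ≤ (bn:ℝ) := Nat.cast_nonneg _
      have hn2bn : ((n:ℝ)^2)^m ≤ (bn:ℝ)^m * Real.exp (lam + lam^2) := by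
        have h1t : 0 < 1 - t := by linarith
        have h1 : (n:ℝ)^2 ≤ (bn:ℝ) * Real.exp (2*t) := by
          rw [hbt]
          calc (n:ℝ)^2 = ((n:ℝ)^2 * (1-t)) * (1-t)⁻¹ :=
                (mul_inv_cancel_right₀ (ne_of_gt h1t) _).symm
          _ ≤ ((n:ℝ)^2 * (1-t)) * Real.exp (2*t) := by
              apply mul_le_mul_of_nonneg_left (inv_one_sub_le_exp ht0 ht2) (by positivity)
        calc ((n:ℝ)^2)^m ≤ ((bn:ℝ) * Real.exp (2*t))^m := by
              apply pow_le_pow_left₀ (by positivity) h1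
        _ = (bn:ℝ)^m * (Real.exp (2*t))^m := mul_pow _ _ _
        _ = (bn:ℝ)^m * Real.exp ((m:ℝ) * (2*t)) := by rw [← Real.exp_nat_mul]
        _ ≤ (bn:ℝ)^m * Real.exp (lam + lam^2) := by
            apply mul_le_mul_of_nonneg_left _ (pow_nonneg hbn0 m)
            apply Real.exp_le_exp.mpr
            have hn2 : (0:ℝ) < (n:ℝ)^2 := by positivity
            have hq1 : (m:ℝ)*(2*t) = (2*m*((n:ℝ)-2+2*m))/(n:ℝ)^2 := by
              rw [ht]; ring
            have hq2 : lam + lam^2 = (2*m*(n:ℝ) + 4*(m:ℝ)^2)/(n:ℝ)^2 := by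
              rw [hlam]; field_simp; ring
            rw [hq1, hq2, div_le_div_iff_of_pos_right hn2]
            have : 2*(m:ℝ)*((n:ℝ)-2+2*m) = 2*m*n - 4*m + 4*(m:ℝ)^2 := by ring
            linarith [hm0.le]
      have hfin : Real.exp 1 * (2*(m:ℝ)) * Real.exp (lam + lam^2)
          ≤ (n:ℝ) * Real.exp ((n:ℝ) * Real.exp (-lam)) := by
        have h2mb : 2*(m:ℝ) ≤ (n:ℝ)*(2*C*Real.log (Real.log n)) := by
          have h1 : 2*(m:ℝ) ≤ 2*(C * n * Real.log (Real.log n)) := by linarith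
          have h2 : 2*(C * (n:ℝ) * Real.log (Real.log n))
              = (n:ℝ)*(2*C*Real.log (Real.log n)) := by ring
          linarith
        have hlam2 : lam^2 ≤ (2*C*Real.log (Real.log n))^2 := by
          apply pow_le_pow_left₀ hlam0.le hlamle
        have hxex : ∀ x:ℝ, x ≤ Real.exp x := fun x => by linarith [Real.add_one_le_exp x]
        have hCL0 : 0 ≤ 2*C*Real.log (Real.log n) := by positivity
        have hc1 : Real.exp 1 * (2*C*Real.log (Real.log n)) * Real.exp (lam + lam^2)
            ≤ Real.exp ((1 + 2*C*Real.log (Real.log n))^2) := by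
          calc Real.exp 1 * (2*C*Real.log (Real.log n)) * Real.exp (lam + lam^2)
              ≤ Real.exp 1 * Real.exp (2*C*Real.log (Real.log n))
                * Real.exp (2*C*Real.log (Real.log n) + (2*C*Real.log (Real.log n))^2) := by
                apply mul_le_mul
                · exact mul_le_mul_of_nonneg_left (hxex _) (Real.exp_pos 1).le
                · exact Real.exp_le_exp.mpr (by linarith [hlamle, hlam2])
                · exact (Real.exp_pos _).le
                · positivity
          _ = Real.exp (1 + 2*C*Real.log (Real.log n)
                + (2*C*Real.log (Real.log n) + (2*C*Real.log (Real.log n))^2)) := by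
                rw [← Real.exp_add, ← Real.exp_add]
          _ = Real.exp ((1 + 2*C*Real.log (Real.log n))^2) := by congr 1; ring
        have hc2 : (1 + 2*C*Real.log (Real.log n))^2 ≤ (n:ℝ) * Real.exp (-lam) := by
          have hgD : Real.exp lam ≤ (Real.log n)^D := by
            calc Real.exp lam ≤ Real.exp ((D:ℝ)*Real.log (Real.log n)) := by
                  apply Real.exp_le_exp.mpr
                  calc lam ≤ 2*C*Real.log (Real.log n) := hlamle
                  _ ≤ (D:ℝ)*Real.log (Real.log n) := mul_le_mul_of_nonneg_right h2CD hL0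
            _ = (Real.exp (Real.log (Real.log n)))^D := by rw [← Real.exp_nat_mul]
            _ = (Real.log n)^D := by rw [Real.exp_log hgpos]
          calc (1 + 2*C*Real.log (Real.log n))^2 ≤ ((1+2*C)*Real.log n)^2 := by
                apply pow_le_pow_left₀ (by positivity)
                have hLC : 2*C*Real.log (Real.log n) ≤ 2*C*Real.log n :=
                  mul_le_mul_of_nonneg_left hLg (by positivity)
                have : (1+2*C)*Real.log n = Real.log n + 2*C*Real.log n := by ring
                linarith
          _ = (1+2*C)^2 * (Real.log n)^2 := by rw [mul_pow]
          _ ≤ (n:ℝ) / (Real.log n)^D := by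
                rw [le_div_iff₀ (by positivity)]
                have hpw : (1+2*C)^2 * (Real.log n)^2 * ((Real.log n):ℝ)^D
                    = (1+2*C)^2 * (Real.log n)^(D+2) := by
                  rw [pow_add]; ring
                rw [hpw]
                exact hF2
          _ ≤ (n:ℝ) * Real.exp (-lam) := by
                rw [div_eq_mul_inv]
                apply mul_le_mul_of_nonneg_left _ hn0.le
                rw [Real.exp_neg]
                exact inv_anti₀ (Real.exp_pos lam) hgD
        calc Real.exp 1 * (2*(m:ℝ)) * Real.exp (lam + lam^2)
            ≤ Real.exp 1 * ((n:ℝ)*(2*C*Real.log (Real.log n))) * Real.exp (lam + lam^2) := by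
              apply mul_le_mul_of_nonneg_right _ (Real.exp_pos _).le
              exact mul_le_mul_of_nonneg_left h2mb (Real.exp_pos 1).le
        _ = (n:ℝ) * (Real.exp 1 * (2*C*Real.log (Real.log n)) * Real.exp (lam + lam^2)) := by
              ring
        _ ≤ (n:ℝ) * Real.exp ((1 + 2*C*Real.log (Real.log n))^2) :=
              mul_le_mul_of_nonneg_left hc1 hn0.le
        _ ≤ (n:ℝ) * Real.exp ((n:ℝ) * Real.exp (-lam)) :=
              mul_le_mul_of_nonneg_left (Real.exp_le_exp.mpr hc2) hn0.le
      -- combine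
      have hcancel : Real.exp ((n:ℝ) * Real.exp (-lam))
          * Real.exp (-((n:ℝ) * Real.exp (-lam))) = 1 := by
        rw [← Real.exp_add]
        simp
      calc Real.exp 1 * (2*(m:ℝ)) * (n:ℝ)^(2*m) * Real.exp (-X)
          = Real.exp 1 * (2*(m:ℝ)) * ((n:ℝ)^2)^m
            * (Real.exp (-(2*(m:ℝ)) * Real.exp (-lam)) * Real.exp (-((n:ℝ) * Real.exp (-lam)))) := by
            rw [hnn, hsplit]
      _ ≤ Real.exp 1 * (2*(m:ℝ)) * ((bn:ℝ)^m * Real.exp (lam + lam^2))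
            * (Real.exp (-(2*(m:ℝ)) * Real.exp (-lam)) * Real.exp (-((n:ℝ) * Real.exp (-lam)))) := by
            apply mul_le_mul_of_nonneg_right _ (by positivity)
            apply mul_le_mul_of_nonneg_left hn2bn (by positivity)
      _ = (Real.exp 1 * (2*(m:ℝ)) * Real.exp (lam + lam^2))
            * Real.exp (-((n:ℝ) * Real.exp (-lam)))
            * ((bn:ℝ)^m * Real.exp (-(2*(m:ℝ)) * Real.exp (-lam))) := by ring
      _ ≤ ((n:ℝ) * Real.exp ((n:ℝ) * Real.exp (-lam)))
            * Real.exp (-((n:ℝ) * Real.exp (-lam)))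
            * ((bn:ℝ)^m * Real.exp (-(2*(m:ℝ)) * Real.exp (-lam))) := by
            apply mul_le_mul_of_nonneg_right _ (by positivity)
            exact mul_le_mul_of_nonneg_right hfin (Real.exp_pos _).le
      _ = (n:ℝ) * Real.exp (-(2*m) * Real.exp (-lam)) * (bn:ℝ)^m := by
            rw [mul_assoc ((n:ℝ)) _ _, hcancel]
            push_cast
            ring
    -- assemble
    have hbn2 : (bn:ℝ)^m ≤ 2^m * (m.factorial * (Mc.choose m)) := by
      have : (bn:ℝ)^m = 2^m * ((Mc + 1 - m : ℕ):ℝ)^m := by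
        rw [← mul_pow, hbndef]; push_cast; ring_nf
      rw [this]
      exact mul_le_mul_of_nonneg_left hTlow (by positivity)
    have hfinal : ((graphsWithEdgesMinDeg2 n m).card : ℝ) * (2^m * m.factorial)
        ≤ ((n:ℝ) * Real.exp (-(2*m) * Real.exp (-lam)) * (Mc.choose m)) * (2^m * m.factorial) := by
      calc ((graphsWithEdgesMinDeg2 n m).card : ℝ) * (2^m * m.factorial)
          ≤ (Fcnt n (2*m) : ℝ) := hA
      _ ≤ ((2*m).factorial : ℝ) * E^n / lam^(2*m) := hB
      _ ≤ (n:ℝ) * Real.exp (-(2*m) * Real.exp (-lam)) * (bn:ℝ)^m := hMain2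
      _ ≤ (n:ℝ) * Real.exp (-(2*m) * Real.exp (-lam)) * (2^m * (m.factorial * (Mc.choose m))) := by
          apply mul_le_mul_of_nonneg_left hbn2 (by positivity)
      _ = ((n:ℝ) * Real.exp (-(2*m) * Real.exp (-lam)) * (Mc.choose m)) * (2^m * m.factorial) := by
          ring
    have hfac0 : (0:ℝ) < 2^m * m.factorial := by positivity
    have hred : ((graphsWithEdgesMinDeg2 n m).card : ℝ)
        ≤ (n:ℝ) * Real.exp (-(2*m) * Real.exp (-lam)) * (Mc.choose m) :=
      (mul_le_mul_iff_of_pos_right hfac0).mp hfinal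
    rw [hedges]
    rw [show -(2 * (m:ℝ)) / (n:ℝ) = -lam from hexparg]
    exact hred
end

section
/- Let G be a graph on [n], F_0 an edge set on [n] such that every set S ⊆ [n] is incident to at most 0.11n|S| + n^{7/4} edges of F_0 \ E(G) (property R). Suppose End and {End_u}_{u ∈ End} are families of subsets of [n], each of size at least 0.25n, suppose at most 2·(0.01n²) pairs (u,w) with u ∈ End, w ∈ End_u have uw in F \ F_0, and suppose no pair (u,w) with u ∈ End, w ∈ End_u has uw ∈ F ∩ E(G), where F ⊇ F_0. Then for n sufficiently large there exists u ∈ End and w ∈ End_u with uw ∉ F. -/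
open Finset

open scoped Classical in
lemma block_count {n : ℕ} (H : Finset (Sym2 (Fin n))) (T : Finset (Fin n)) :
    ∑ u ∈ T, (H.filter fun e => u ∈ e).card
      ≤ (H.filter fun e => ∃ v ∈ T, v ∈ e).card + T.card * T.card := by
  classical
  have key : ∀ e ∈ H, (T.filter fun u => u ∈ e).card
      ≤ (if (∃ v ∈ T, v ∈ e) then 1 else 0) + (if e ∈ T.sym2 then 1 else 0) := by
    intro e _
    induction e using Sym2.inductionOn with
    | hf a b =>
      by_cases h1 : ∃ v ∈ T, v ∈ s(a, b)
      · by_cases h2 : s(a, b) ∈ T.sym2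
        · simp only [h1, h2, if_true]
          calc (T.filter fun u => u ∈ s(a, b)).card
              ≤ ({a, b} : Finset (Fin n)).card := by
                apply card_le_card
                intro u hu
                simp only [mem_filter, Sym2.mem_iff] at hu
                simp [hu.2]
            _ ≤ 2 := by
                apply le_trans (card_insert_le _ _)
                simp
        · simp only [h1, h2, if_true, if_false]
          rw [Finset.mk_mem_sym2_iff] at h2
          push_neg at h2
          by_cases ha : a ∈ T
          · have hb := h2 ha
            calc (T.filter fun u => u ∈ s(a, b)).card
                ≤ ({a} : Finset (Fin n)).card := by
                  apply card_le_card
                  intro u hu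
                  simp only [mem_filter, Sym2.mem_iff] at hu
                  rcases hu.2 with h | h
                  · simp [h]
                  · exact absurd (h ▸ hu.1) hb
              _ = 1 := card_singleton a
          · calc (T.filter fun u => u ∈ s(a, b)).card
                ≤ ({b} : Finset (Fin n)).card := by
                  apply card_le_card
                  intro u hu
                  simp only [mem_filter, Sym2.mem_iff] at hu
                  rcases hu.2 with h | h
                  · exact absurd (h ▸ hu.1) ha
                  · simp [h]
              _ = 1 := card_singleton b
      · have hemp : (T.filter fun u => u ∈ s(a, b)) = ∅ := by
          apply filter_eq_empty_iff.mpr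
          intro u hu hue
          exact h1 ⟨u, hu, hue⟩
        rw [hemp]
        simp
  have swap : ∑ u ∈ T, (H.filter fun e => u ∈ e).card
      = ∑ e ∈ H, (T.filter fun u => u ∈ e).card := by
    simp only [card_filter]
    exact Finset.sum_comm
  rw [swap]
  calc ∑ e ∈ H, (T.filter fun u => u ∈ e).card
      ≤ ∑ e ∈ H, ((if (∃ v ∈ T, v ∈ e) then 1 else 0) + (if e ∈ T.sym2 then 1 else 0)) :=
        Finset.sum_le_sum key
    _ = (H.filter fun e => ∃ v ∈ T, v ∈ e).card + (H.filter fun e => e ∈ T.sym2).card := by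
        rw [Finset.sum_add_distrib, card_filter, card_filter]
    _ ≤ (H.filter fun e => ∃ v ∈ T, v ∈ e).card + T.card * T.card := by
        apply Nat.add_le_add_left
        calc (H.filter fun e => e ∈ T.sym2).card ≤ T.sym2.card := by
              apply card_le_card_of_injOn id
              · intro e he
                exact (mem_filter.mp he).2
              · intro x _ y _ h; exact h
          _ ≤ T.card * T.card := by
              rw [Finset.card_sym2, Nat.choose_two_right]
              rcases Nat.eq_zero_or_pos T.card with h | h
              · simp [h]
              · apply Nat.div_le_of_le_mul
                have he : T.card + 1 - 1 = T.card := by omega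
                rw [he]
                nlinarith

open scoped Classical in
/-- Let `G` be a graph on `[n]` and `F₀` an edge set such that every
`S ⊆ [n]` is incident to at most `0.11n|S| + n^{7/4}` edges of `F₀ \ E(G)` (property `R`).
Let `End` and `{End_u}` be families of vertex sets, each of size at least `0.25n`; suppose
at most `2·(0.01n²)` pairs `(u,w)` with `u ∈ End, w ∈ End_u` have `uw ∈ F \ F₀`, and no
such pair has `uw ∈ F ∩ E(G)`, where `F ⊇ F₀`. Then, for `n` sufficiently large, there exist
`u ∈ End` and `w ∈ End_u` with `uw ∉ F`. -/
theorem stmt18 :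
    ∃ N : ℕ, ∀ n ≥ N, ∀ (G : SimpleGraph (Fin n)) (F₀ F : Finset (Sym2 (Fin n)))
      (hR : ∀ S : Finset (Fin n),
        ((((F₀ \ G.edgeFinset)).filter fun e => ∃ v ∈ S, v ∈ e).card : ℝ)
          ≤ 0.11 * n * S.card + (n : ℝ) ^ ((7 : ℝ) / 4))
      (hF₀F : F₀ ⊆ F)
      (En : Finset (Fin n)) (Enu : Fin n → Finset (Fin n))
      (hEn : 0.25 * n ≤ (En.card : ℝ))
      (hEnu : ∀ u ∈ En, 0.25 * n ≤ ((Enu u).card : ℝ))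
      (hnew : ((((Finset.univ ×ˢ Finset.univ : Finset (Fin n × Fin n))).filter fun pr =>
          pr.1 ∈ En ∧ pr.2 ∈ Enu pr.1 ∧ s(pr.1, pr.2) ∈ F \ F₀).card : ℝ)
        ≤ 2 * (0.01 * n ^ 2))
      (hqueried : ∀ u ∈ En, ∀ w ∈ Enu u, s(u, w) ∉ F ∩ G.edgeFinset),
      ∃ u ∈ En, ∃ w ∈ Enu u, s(u, w) ∉ F := by
  classical
  use 10 ^ 20
  intro n hn G F₀ F hR hF₀F En Enu hEn hEnu hnew hqueried
  by_contra hcon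
  push_neg at hcon
  set H : Finset (Sym2 (Fin n)) := F₀ \ G.edgeFinset with hHdef
  set a : Fin n → ℕ := fun u => ((Enu u).filter fun w => s(u, w) ∈ F \ F₀).card with hadef
  set d : Fin n → ℕ := fun u => (H.filter fun e => u ∈ e).card with hddef
  -- Step A : pointwise bound
  have stepA : ∀ u ∈ En, (Enu u).card ≤ a u + d u := by
    intro u hu
    have hsub : Enu u ⊆ ((Enu u).filter fun w => s(u, w) ∈ F \ F₀)
        ∪ ((Enu u).filter fun w => s(u, w) ∈ H) := by
      intro w hw
      have hF : s(u, w) ∈ F := hcon u hu w hw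
      by_cases h0 : s(u, w) ∈ F₀
      · apply mem_union_right
        apply mem_filter.mpr
        refine ⟨hw, mem_sdiff.mpr ⟨h0, fun hg => ?_⟩⟩
        exact hqueried u hu w hw (mem_inter.mpr ⟨hF, hg⟩)
      · apply mem_union_left
        exact mem_filter.mpr ⟨hw, mem_sdiff.mpr ⟨hF, h0⟩⟩
    have h1 : (Enu u).card ≤ a u + ((Enu u).filter fun w => s(u, w) ∈ H).card :=
      le_trans (card_le_card hsub) (card_union_le _ _)
    have h2 : ((Enu u).filter fun w => s(u, w) ∈ H).card ≤ d u := by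
      apply card_le_card_of_injOn (fun w => s(u, w))
      · intro w hw
        rcases mem_filter.mp hw with ⟨_, hH⟩
        exact mem_filter.mpr ⟨hH, by simp⟩
      · intro x _ y _ h
        exact Sym2.congr_right.mp h
    omega
  -- Step B : ∑ a over En is at most the card in hnew
  have stepB : (∑ u ∈ En, a u : ℝ) ≤ 2 * (0.01 * n ^ 2) := by
    have hBU : ∑ u ∈ En, a u
        = (En.biUnion fun u => ({u} : Finset (Fin n)) ×ˢ
            ((Enu u).filter fun w => s(u, w) ∈ F \ F₀)).card := by
      rw [card_biUnion]
      · apply Finset.sum_congr rfl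
        intro u _
        rw [card_product, card_singleton, one_mul]
      · intro x _ y _ hxy
        apply disjoint_left.mpr
        intro p hp hq
        rcases mem_product.mp hp with ⟨hp1, _⟩
        rcases mem_product.mp hq with ⟨hq1, _⟩
        exact hxy ((mem_singleton.mp hp1).symm.trans (mem_singleton.mp hq1))
    have hsub : (En.biUnion fun u => ({u} : Finset (Fin n)) ×ˢ
            ((Enu u).filter fun w => s(u, w) ∈ F \ F₀))
        ⊆ ((Finset.univ ×ˢ Finset.univ : Finset (Fin n × Fin n))).filter fun pr =>
          pr.1 ∈ En ∧ pr.2 ∈ Enu pr.1 ∧ s(pr.1, pr.2) ∈ F \ F₀ := by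
      intro p hp
      rcases mem_biUnion.mp hp with ⟨u, hu, hpu⟩
      rcases mem_product.mp hpu with ⟨hp1, hp2⟩
      have hp1' : p.1 = u := mem_singleton.mp hp1
      rcases mem_filter.mp hp2 with ⟨hw, hFF⟩
      apply mem_filter.mpr
      refine ⟨mem_product.mpr ⟨mem_univ _, mem_univ _⟩, ?_, ?_, ?_⟩
      · rw [hp1']; exact hu
      · rw [hp1']; exact hw
      · rw [hp1']; exact hFF
    calc (∑ u ∈ En, a u : ℝ)
        ≤ ((((Finset.univ ×ˢ Finset.univ : Finset (Fin n × Fin n))).filter fun pr =>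
          pr.1 ∈ En ∧ pr.2 ∈ Enu pr.1 ∧ s(pr.1, pr.2) ∈ F \ F₀).card : ℝ) := by
          exact_mod_cast Nat.cast_le.mpr (hBU ▸ card_le_card hsub)
      _ ≤ 2 * (0.01 * n ^ 2) := hnew
  -- Step C : ∑ d over En, via 100 blocks
  set q : ℕ := n / 100 + 1 with hqdef
  have hq0 : 0 < q := Nat.succ_pos _
  have hn100q : n < q * 100 := by omega
  have hfib : ∀ v : Fin n, v ∈ En → v.val / q ∈ Finset.range 100 := by
    intro v _
    rw [mem_range]
    exact Nat.div_lt_of_lt_mul (lt_of_lt_of_le v.isLt (le_of_lt hn100q))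
  have hTcard : ∀ j, (En.filter fun v => v.val / q = j).card ≤ q := by
    intro j
    have : (En.filter fun v => v.val / q = j).card ≤ (Finset.range q).card := by
      apply card_le_card_of_injOn (fun v => v.val % q)
      · intro v _
        exact mem_range.mpr (Nat.mod_lt _ hq0)
      · intro x hx y hy hxy
        have hxy' : x.val % q = y.val % q := hxy
        rcases mem_filter.mp (Finset.mem_coe.mp hx) with ⟨_, hxj⟩
        rcases mem_filter.mp (Finset.mem_coe.mp hy) with ⟨_, hyj⟩
        have ex := Nat.div_add_mod x.val q
        have ey := Nat.div_add_mod y.val q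
        rw [hxj] at ex
        rw [hyj] at ey
        have : x.val = y.val := by rw [← ex, ← ey, hxy']
        exact Fin.ext this
    simpa using this
  have hfibcard : En.card = ∑ j ∈ Finset.range 100, (En.filter fun v => v.val / q = j).card :=
    Finset.card_eq_sum_card_fiberwise hfib
  have stepC : (∑ u ∈ En, (d u : ℝ))
      ≤ 0.11 * n * En.card + 100 * (n : ℝ) ^ ((7 : ℝ) / 4) + 100 * (q : ℝ) ^ 2 := by
    rw [← Finset.sum_fiberwise_of_maps_to hfib (fun u => (d u : ℝ))]
    have hblock : ∀ j ∈ Finset.range 100,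
        (∑ u ∈ En.filter fun v => v.val / q = j, (d u : ℝ))
          ≤ 0.11 * n * ((En.filter fun v => v.val / q = j).card : ℝ)
            + (n : ℝ) ^ ((7 : ℝ) / 4) + (q : ℝ) ^ 2 := by
      intro j _
      set T := En.filter fun v => v.val / q = j with hT
      have h1 : ∑ u ∈ T, d u
          ≤ (H.filter fun e => ∃ v ∈ T, v ∈ e).card + T.card * T.card := block_count H T
      have h2 : ((H.filter fun e => ∃ v ∈ T, v ∈ e).card : ℝ)
          ≤ 0.11 * n * T.card + (n : ℝ) ^ ((7 : ℝ) / 4) := hR T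
      have hq : (T.card : ℝ) ≤ (q : ℝ) := by exact_mod_cast hTcard j
      have h3 : ((T.card : ℝ) * T.card) ≤ (q : ℝ) ^ 2 := by
        rw [sq]
        exact mul_le_mul hq hq (Nat.cast_nonneg _) (Nat.cast_nonneg _)
      have h1' : (∑ u ∈ T, (d u : ℝ))
          ≤ ((H.filter fun e => ∃ v ∈ T, v ∈ e).card : ℝ) + (T.card : ℝ) * T.card := by
        have := (Nat.cast_le (α := ℝ)).mpr h1
        push_cast at this ⊢
        linarith
      linarith
    calc (∑ j ∈ Finset.range 100, ∑ u ∈ En.filter fun v => v.val / q = j, (d u : ℝ))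
        ≤ ∑ j ∈ Finset.range 100,
            (0.11 * n * ((En.filter fun v => v.val / q = j).card : ℝ)
              + (n : ℝ) ^ ((7 : ℝ) / 4) + (q : ℝ) ^ 2) := Finset.sum_le_sum hblock
      _ = 0.11 * n * En.card + 100 * (n : ℝ) ^ ((7 : ℝ) / 4) + 100 * (q : ℝ) ^ 2 := by
          have hc : ∑ j ∈ Finset.range 100,
              ((En.filter fun v => v.val / q = j).card : ℝ) = (En.card : ℝ) := by
            rw [hfibcard]
            push_cast
            ring
          rw [Finset.sum_add_distrib, Finset.sum_add_distrib, ← Finset.mul_sum, hc,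
            Finset.sum_const, Finset.sum_const, Finset.card_range, nsmul_eq_mul, nsmul_eq_mul]
          push_cast
          ring
  -- Assemble
  have hlow : 0.25 * n * En.card ≤ (∑ u ∈ En, ((Enu u).card : ℝ)) := by
    calc (0.25 : ℝ) * n * En.card = ∑ _u ∈ En, (0.25 * n : ℝ) := by
          rw [Finset.sum_const, nsmul_eq_mul]; ring
      _ ≤ ∑ u ∈ En, ((Enu u).card : ℝ) := Finset.sum_le_sum fun u hu => hEnu u hu
  have hmid : (∑ u ∈ En, ((Enu u).card : ℝ)) ≤ (∑ u ∈ En, a u : ℝ) + (∑ u ∈ En, d u : ℝ) := by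
    rw [← Finset.sum_add_distrib]
    apply Finset.sum_le_sum
    intro u hu
    exact_mod_cast stepA u hu
  -- numeric facts
  have hnr : ((10 : ℝ) ^ 20) ≤ (n : ℝ) := by exact_mod_cast hn
  have hm_le : (En.card : ℝ) ≤ (n : ℝ) := by
    have := card_le_card (subset_univ En)
    simpa using (Nat.cast_le (α := ℝ)).mpr this
  have hq_le : (q : ℝ) ≤ (n : ℝ) / 100 + 1 := by
    rw [hqdef]
    push_cast
    have : ((n / 100 : ℕ) : ℝ) ≤ (n : ℝ) / 100 := Nat.cast_div_le
    linarith
  have hpow : (n : ℝ) ^ ((7 : ℝ) / 4) * 10 ^ 5 ≤ (n : ℝ) ^ 2 := by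
    have hn0 : (0 : ℝ) < (n : ℝ) := by positivity
    have h14 : ((10 : ℝ) ^ 5) ≤ (n : ℝ) ^ ((1 : ℝ) / 4) := by
      have e1 : ((10 : ℝ) ^ 5) = (((10 : ℝ) ^ 5) ^ (4 : ℕ)) ^ ((1 : ℝ) / 4) := by
        rw [show ((1 : ℝ) / 4) = (((4 : ℕ) : ℝ))⁻¹ by norm_num]
        rw [Real.pow_rpow_inv_natCast (by norm_num) (by norm_num)]
      rw [e1]
      apply Real.rpow_le_rpow (by positivity) _ (by norm_num)
      calc (((10 : ℝ) ^ 5) ^ (4 : ℕ)) = (10 : ℝ) ^ 20 := by norm_num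
        _ ≤ (n : ℝ) := hnr
    calc (n : ℝ) ^ ((7 : ℝ) / 4) * 10 ^ 5
        ≤ (n : ℝ) ^ ((7 : ℝ) / 4) * (n : ℝ) ^ ((1 : ℝ) / 4) := by
          apply mul_le_mul_of_nonneg_left h14 (by positivity)
      _ = (n : ℝ) ^ ((7 : ℝ) / 4 + (1 : ℝ) / 4) := (Real.rpow_add hn0 _ _).symm
      _ = (n : ℝ) ^ ((2 : ℕ) : ℝ) := by norm_num
      _ = (n : ℝ) ^ 2 := Real.rpow_natCast _ 2
  have hP0 : (0 : ℝ) ≤ (n : ℝ) ^ ((7 : ℝ) / 4) := by positivity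
  have hq0' : (0 : ℝ) ≤ (q : ℝ) := Nat.cast_nonneg q
  have main : 0.25 * n * (En.card : ℝ)
      ≤ 2 * (0.01 * n ^ 2) + 0.11 * n * En.card
        + 100 * (n : ℝ) ^ ((7 : ℝ) / 4) + 100 * (q : ℝ) ^ 2 := by
    linarith
  have hq2 : (q : ℝ) ^ 2 ≤ ((n : ℝ) / 100 + 1) ^ 2 := pow_le_pow_left₀ hq0' hq_le 2
  have hexp : ((n : ℝ) / 100 + 1) ^ 2 = (n : ℝ) ^ 2 / 10000 + (n : ℝ) / 50 + 1 := by ring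
  have hsq : 10 ^ 20 * (n : ℝ) ≤ (n : ℝ) * (n : ℝ) :=
    mul_le_mul_of_nonneg_right hnr (Nat.cast_nonneg n)
  have hn2 : (n : ℝ) * (n : ℝ) = (n : ℝ) ^ 2 := by ring
  have hprod : 0.14 * (n : ℝ) * (0.25 * (n : ℝ)) ≤ 0.14 * (n : ℝ) * (En.card : ℝ) :=
    mul_le_mul_of_nonneg_left hEn (by positivity)
  have hP : (n : ℝ) ^ ((7 : ℝ) / 4) ≤ (n : ℝ) ^ 2 / 100000 := by linarith
  linarith
end
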